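/- arXiv:1107.2826 — 4 statements merged into one kernel-verified Lean document; each statement's English description precedes it below -/
import Mathlib

section
/- Let Δₙ ⊂ ℝ² be a regular n-gon with side length 1 (n ≥ 3). If a straight line L intersects the boundary of Δₙ at two points A and B, let d = |AB| and let l₁, l₂ be the lengths of the two boundary paths of Δₙ joining A and B. Then there exists an absolute constant C > 0, independent of n, such that C·min{l₁, l₂} ≤ d ≤ min{l₁, l₂}. -/
set_option maxHeartbeats 1000000

open Real

/-- The `i`-th vertex of the regular `n`-gon with side length one, centered at the
origin (circumradius `1 / (2 sin (π/n))`). -/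
noncomputable def polyVtx (n : ℕ) (i : ℤ) : ℂ :=
  (1 / (2 * Real.sin (Real.pi / n))) * Complex.exp (2 * Real.pi * i / n * Complex.I)

/-- Arclength parametrization of the boundary of the regular `n`-gon with side length
one: for `s ∈ [0, n]`, `polyBd n s` is the point at arclength `s` along the boundary. -/
noncomputable def polyBd (n : ℕ) (s : ℝ) : ℂ :=
  (1 - Int.fract s) • polyVtx n ⌊s⌋ + Int.fract s • polyVtx n (⌊s⌋ + 1)

namespace PolyAux

lemma polyVtx_exp (n : ℕ) (i : ℤ) :
    polyVtx n i = ((1 / (2 * Real.sin (Real.pi / n)) : ℝ) : ℂ) *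
      Complex.exp ((((2 * i) * (Real.pi / n) : ℝ)) * Complex.I) := by
  unfold polyVtx; push_cast; ring_nf

lemma sinx_pos {n : ℕ} (hn : 3 ≤ n) : 0 < Real.sin (π / n) := by
  have hn0 : (0:ℝ) < n := by positivity
  have hn3 : (3:ℝ) ≤ n := by exact_mod_cast hn
  apply Real.sin_pos_of_pos_of_lt_pi (by positivity)
  calc π / n ≤ π / 3 := by
        rw [div_le_div_iff₀ hn0 (by norm_num : (0:ℝ) < 3)]
        nlinarith [Real.pi_pos]
    _ < π := by linarith [Real.pi_pos]

lemma exp_sub_exp (a d : ℝ) :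
    Complex.exp (((a + d : ℝ) : ℂ) * Complex.I) - Complex.exp ((a : ℂ) * Complex.I)
      = ((2 * Real.sin (d / 2) : ℝ) : ℂ) *
          Complex.exp (((a + d / 2 : ℝ) : ℂ) * Complex.I) * Complex.I := by
  have h1 : Real.cos (a + d) - Real.cos a
      = -2 * Real.sin ((a + d + a) / 2) * Real.sin ((a + d - a) / 2) := Real.cos_sub_cos _ _
  have h2 : Real.sin (a + d) - Real.sin a
      = 2 * Real.sin ((a + d - a) / 2) * Real.cos ((a + d + a) / 2) := Real.sin_sub_sin _ _
  rw [show (a + d + a) / 2 = a + d / 2 by ring, show (a + d - a) / 2 = d / 2 by ring] at h1 h2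
  apply Complex.ext <;>
    simp only [Complex.sub_re, Complex.sub_im, Complex.add_re, Complex.add_im,
      Complex.mul_re, Complex.mul_im, Complex.ofReal_re, Complex.ofReal_im,
      Complex.I_re, Complex.I_im, Complex.exp_ofReal_mul_I_re, Complex.exp_ofReal_mul_I_im]
  · linear_combination h1
  · linear_combination h2

lemma side_norm {n : ℕ} (hn : 3 ≤ n) (i : ℤ) :
    ‖polyVtx n (i + 1) - polyVtx n i‖ = 1 := by
  have hsx := sinx_pos hn
  set x : ℝ := π / n with hxdef
  have hdiff : polyVtx n (i + 1) - polyVtx n i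
      = ((1 / (2 * Real.sin x) : ℝ) : ℂ) *
        (Complex.exp ((((2 * (i : ℝ)) * x + 2 * x : ℝ) : ℂ) * Complex.I)
          - Complex.exp ((((2 * (i : ℝ)) * x : ℝ) : ℂ) * Complex.I)) := by
    rw [polyVtx_exp n (i + 1), polyVtx_exp n i, ← hxdef]
    rw [show ((2 * ((i + 1 : ℤ) : ℝ)) * x : ℝ) = (2 * (i : ℝ)) * x + 2 * x by push_cast; ring]
    ring
  rw [show ((2 * (i : ℝ)) * x + 2 * x : ℝ) = ((2 * (i : ℝ)) * x) + (2 * x) by ring] at hdiff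
  rw [exp_sub_exp ((2 * (i : ℝ)) * x) (2 * x)] at hdiff
  rw [show (2 * x) / 2 = x by ring] at hdiff
  rw [hdiff]
  rw [norm_mul, norm_mul, norm_mul, Complex.norm_I, Complex.norm_exp_ofReal_mul_I,
    Complex.norm_real, Complex.norm_real, Real.norm_eq_abs, Real.norm_eq_abs]
  rw [abs_of_nonneg (by positivity : (0:ℝ) ≤ 1 / (2 * Real.sin x)),
    abs_of_nonneg (by positivity : (0:ℝ) ≤ 2 * Real.sin x)]
  field_simp

lemma polyVtx_periodic {n : ℕ} (hn : 3 ≤ n) (i : ℤ) :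
    polyVtx n (i + n) = polyVtx n i := by
  have hn0 : (n : ℂ) ≠ 0 := by
    simp only [ne_eq, Nat.cast_eq_zero]; omega
  unfold polyVtx
  congr 1
  have harg : 2 * (Real.pi : ℂ) * ((i : ℤ) + (n : ℕ) : ℤ) / n * Complex.I
      = 2 * (Real.pi : ℂ) * i / n * Complex.I + 2 * (Real.pi : ℂ) * Complex.I := by
    push_cast
    field_simp
  rw [harg, Complex.exp_add, Complex.exp_two_pi_mul_I, mul_one]

lemma polyBd_periodic {n : ℕ} (hn : 3 ≤ n) (s : ℝ) :
    polyBd n (s + n) = polyBd n s := by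
  unfold polyBd
  rw [Int.floor_add_natCast, Int.fract_add_natCast]
  rw [show (⌊s⌋ + (n:ℤ) + 1 : ℤ) = (⌊s⌋ + 1) + (n:ℤ) by ring]
  rw [polyVtx_periodic hn, polyVtx_periodic hn]

lemma seg {n : ℕ} (hn : 3 ≤ n) {s t : ℝ} (hst : s ≤ t) (ht : t ≤ (⌊s⌋ : ℝ) + 1) :
    dist (polyBd n s) (polyBd n t) ≤ t - s := by
  rcases eq_or_lt_of_le ht with heq | hlt
  · -- t = ⌊s⌋ + 1
    have hfl : ⌊t⌋ = ⌊s⌋ + 1 := by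
      rw [heq, show ((⌊s⌋:ℝ) + 1) = ((⌊s⌋ + 1 : ℤ) : ℝ) by push_cast; ring, Int.floor_intCast]
    have hfr : Int.fract t = 0 := by
      rw [heq, show ((⌊s⌋:ℝ) + 1) = ((⌊s⌋ + 1 : ℤ) : ℝ) by push_cast; ring, Int.fract_intCast]
    have hdiff : polyBd n t - polyBd n s
        = (t - s) • (polyVtx n (⌊s⌋ + 1) - polyVtx n ⌊s⌋) := by
      unfold polyBd
      rw [hfl, hfr]
      have hts : t - s = 1 - Int.fract s := by
        rw [← Int.self_sub_floor, heq]; ring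
      rw [hts]
      module
    have : dist (polyBd n s) (polyBd n t) = ‖polyBd n t - polyBd n s‖ := by
      rw [dist_eq_norm, norm_sub_rev]
    rw [this, hdiff, norm_smul, side_norm hn, mul_one, Real.norm_eq_abs,
      abs_of_nonneg (by linarith)]
  · -- ⌊t⌋ = ⌊s⌋
    have hfl : ⌊t⌋ = ⌊s⌋ := by
      apply Int.floor_eq_iff.mpr
      constructor
      · exact le_trans (Int.floor_le s) hst
      · push_cast; exact hlt
    have hdiff : polyBd n t - polyBd n s
        = (t - s) • (polyVtx n (⌊s⌋ + 1) - polyVtx n ⌊s⌋) := by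
      unfold polyBd
      rw [hfl]
      have e1 : Int.fract t = Int.fract s + (t - s) := by
        rw [← Int.self_sub_floor, ← Int.self_sub_floor, hfl]; ring
      rw [e1]
      module
    have hd2 : dist (polyBd n s) (polyBd n t) = ‖polyBd n t - polyBd n s‖ := by
      rw [dist_eq_norm, norm_sub_rev]
    rw [hd2, hdiff, norm_smul, side_norm hn, mul_one, Real.norm_eq_abs,
      abs_of_nonneg (by linarith)]


lemma lip_aux {n : ℕ} (hn : 3 ≤ n) :
    ∀ (m : ℕ) {s t : ℝ}, s ≤ t → ⌊t⌋ - ⌊s⌋ ≤ (m : ℤ) →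
      dist (polyBd n s) (polyBd n t) ≤ t - s := by
  intro m
  induction m with
  | zero =>
    intro s t hst hm
    apply seg hn hst
    have h1 : ⌊t⌋ = ⌊s⌋ := le_antisymm (by omega) (Int.floor_le_floor hst)
    have := Int.lt_floor_add_one t
    rw [h1] at this
    push_cast at this ⊢
    linarith
  | succ m ih =>
    intro s t hst hm
    by_cases h : ⌊t⌋ - ⌊s⌋ ≤ (m : ℤ)
    · exact ih hst h
    · push_neg at h
      set c : ℝ := (⌊s⌋ : ℝ) + 1 with hcdef
      have hsc : s ≤ c := (Int.lt_floor_add_one s).le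
      have hfc : ⌊c⌋ = ⌊s⌋ + 1 := by
        rw [hcdef, show ((⌊s⌋:ℝ) + 1) = ((⌊s⌋ + 1 : ℤ) : ℝ) by push_cast; ring,
          Int.floor_intCast]
      have hct : c ≤ t := by
        have h1 : ⌊s⌋ + 1 ≤ ⌊t⌋ := by omega
        have h2 : ((⌊s⌋ + 1 : ℤ) : ℝ) ≤ (⌊t⌋ : ℝ) := by exact_mod_cast h1
        have := Int.floor_le t
        rw [hcdef]; push_cast at h2 ⊢; linarith
      have d1 : dist (polyBd n s) (polyBd n c) ≤ c - s := seg hn hsc (by rw [hcdef])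
      have d2 : dist (polyBd n c) (polyBd n t) ≤ t - c := by
        apply ih hct
        rw [hfc]; omega
      calc dist (polyBd n s) (polyBd n t)
          ≤ dist (polyBd n s) (polyBd n c) + dist (polyBd n c) (polyBd n t) :=
            dist_triangle _ _ _
        _ ≤ (c - s) + (t - c) := add_le_add d1 d2
        _ = t - s := by ring

lemma lip {n : ℕ} (hn : 3 ≤ n) {s t : ℝ} (hst : s ≤ t) :
    dist (polyBd n s) (polyBd n t) ≤ t - s := by
  apply lip_aux hn (⌊t⌋ - ⌊s⌋).toNat hst
  rw [Int.toNat_of_nonneg (by linarith [Int.floor_le_floor hst] : (0:ℤ) ≤ ⌊t⌋ - ⌊s⌋)]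


lemma e_mul (r₁ r₂ : ℝ) :
    Complex.exp ((r₁ : ℂ) * Complex.I) * Complex.exp ((r₂ : ℂ) * Complex.I)
      = Complex.exp (((r₁ + r₂ : ℝ) : ℂ) * Complex.I) := by
  rw [← Complex.exp_add]; push_cast; ring_nf

/-- key projection computation -/
lemma proj_id (n : ℕ) (a b : ℤ) (u₁ u₂ : ℝ) :
    (1 / (2 * Real.sin (Real.pi / n))) *
      ((1 + u₁ - u₂) * Real.sin (((b : ℝ) - a - 1) * (Real.pi / n))
        + (1 - u₁ + u₂) * Real.sin (((b : ℝ) - a + 1) * (Real.pi / n)))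
      ≤ dist ((1 - u₁) • polyVtx n a + u₁ • polyVtx n (a + 1))
             ((1 - u₂) • polyVtx n b + u₂ • polyVtx n (b + 1)) := by
  set x : ℝ := Real.pi / n with hx
  set R : ℝ := 1 / (2 * Real.sin x) with hR
  set P : ℂ := (1 - u₁) • polyVtx n a + u₁ • polyVtx n (a + 1)
  set Q : ℂ := (1 - u₂) • polyVtx n b + u₂ • polyVtx n (b + 1)
  set θ : ℝ := ((a : ℝ) + b + 1) * x with hθ
  set V : ℂ := (starRingEnd ℂ) (Complex.I * Complex.exp ((θ : ℂ) * Complex.I)) * (Q - P) with hV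
  have habs : dist P Q = ‖V‖ := by
    rw [hV, Complex.dist_eq, norm_mul, Complex.norm_conj, norm_mul, Complex.norm_I,
      Complex.norm_exp_ofReal_mul_I, one_mul, one_mul, norm_sub_rev]
  have hre : V.re = R * ((1 + u₁ - u₂) * Real.sin (((b : ℝ) - a - 1) * x)
        + (1 - u₁ + u₂) * Real.sin (((b : ℝ) - a + 1) * x)) := by
    have hQP : Q - P = (R : ℂ) *
        (((1 - u₂ : ℝ) : ℂ) * Complex.exp ((((2 * b) * x : ℝ) : ℂ) * Complex.I)
          + ((u₂ : ℝ) : ℂ) * Complex.exp ((((2 * (b+1)) * x : ℝ) : ℂ) * Complex.I)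
          - ((1 - u₁ : ℝ) : ℂ) * Complex.exp ((((2 * a) * x : ℝ) : ℂ) * Complex.I)
          - ((u₁ : ℝ) : ℂ) * Complex.exp ((((2 * (a+1)) * x : ℝ) : ℂ) * Complex.I)) := by
      simp only [Q, P, polyVtx_exp, ← hx, ← hR, Complex.real_smul]
      push_cast
      ring_nf
    rw [hV, hQP]
    have hconj : (starRingEnd ℂ) (Complex.I * Complex.exp ((θ : ℂ) * Complex.I))
        = -Complex.I * Complex.exp (((-θ : ℝ) : ℂ) * Complex.I) := by
      rw [map_mul, Complex.conj_I, ← Complex.exp_conj]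
      push_cast
      simp [Complex.conj_ofReal]
    rw [hconj]
    have expand : -Complex.I * Complex.exp (((-θ : ℝ) : ℂ) * Complex.I) * ((R : ℂ) *
        (((1 - u₂ : ℝ) : ℂ) * Complex.exp ((((2 * b) * x : ℝ) : ℂ) * Complex.I)
          + ((u₂ : ℝ) : ℂ) * Complex.exp ((((2 * (b+1)) * x : ℝ) : ℂ) * Complex.I)
          - ((1 - u₁ : ℝ) : ℂ) * Complex.exp ((((2 * a) * x : ℝ) : ℂ) * Complex.I)
          - ((u₁ : ℝ) : ℂ) * Complex.exp ((((2 * (a+1)) * x : ℝ) : ℂ) * Complex.I)))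
      = (R : ℂ) * (-Complex.I) *
        (((1 - u₂ : ℝ) : ℂ) * Complex.exp (((-θ + (2 * b) * x : ℝ) : ℂ) * Complex.I)
          + ((u₂ : ℝ) : ℂ) * Complex.exp (((-θ + (2 * (b+1)) * x : ℝ) : ℂ) * Complex.I)
          - ((1 - u₁ : ℝ) : ℂ) * Complex.exp (((-θ + (2 * a) * x : ℝ) : ℂ) * Complex.I)
          - ((u₁ : ℝ) : ℂ) * Complex.exp (((-θ + (2 * (a+1)) * x : ℝ) : ℂ) * Complex.I)) := by
      simp only [← e_mul]; ring
    rw [expand]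
    have h1 : -θ + (2 * (b:ℝ)) * x = ((b:ℝ) - a - 1) * x := by rw [hθ]; ring
    have h2 : -θ + (2 * ((b:ℝ)+1)) * x = ((b:ℝ) - a + 1) * x := by rw [hθ]; ring
    have h3 : -θ + (2 * (a:ℝ)) * x = -(((b:ℝ) - a + 1) * x) := by rw [hθ]; ring
    have h4 : -θ + (2 * ((a:ℝ)+1)) * x = -(((b:ℝ) - a - 1) * x) := by rw [hθ]; ring
    rw [h1, h2, h3, h4]
    simp only [Complex.mul_re, Complex.mul_im, Complex.add_re, Complex.add_im,
      Complex.sub_re, Complex.sub_im, Complex.neg_re, Complex.neg_im, Complex.I_re,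
      Complex.I_im, Complex.ofReal_re, Complex.ofReal_im,
      Complex.exp_ofReal_mul_I_re, Complex.exp_ofReal_mul_I_im]
    rw [Real.sin_neg, Real.sin_neg, Real.cos_neg, Real.cos_neg]
    ring
  calc R * ((1 + u₁ - u₂) * Real.sin (((b : ℝ) - a - 1) * x)
        + (1 - u₁ + u₂) * Real.sin (((b : ℝ) - a + 1) * x)) = V.re := hre.symm
    _ ≤ ‖V‖ := Complex.re_le_norm V
    _ = dist P Q := habs.symm


lemma claim2 {x m : ℝ} (hx : 0 < x) (hm : 0 ≤ m) (hmx : m * x ≤ π / 2) :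
    m * Real.sin x ≤ 2 * Real.sin (m * x) := by
  have h1 : 2 / π * (m * x) ≤ Real.sin (m * x) :=
    Real.mul_le_sin (by positivity) hmx
  have h2 : Real.sin x ≤ x := Real.sin_le hx.le
  have hpi : π ≤ 4 := Real.pi_le_four
  have hpi0 : 0 < π := Real.pi_pos
  have hmx0 : 0 ≤ m * x := mul_nonneg hm hx.le
  have h4pi : 1 ≤ 4 / π := by rw [le_div_iff₀ hpi0]; linarith
  have key : m * x ≤ 2 * (2 / π * (m * x)) := by
    have := mul_le_mul_of_nonneg_right h4pi hmx0
    calc m * x = 1 * (m * x) := by ring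
      _ ≤ 4 / π * (m * x) := this
      _ = 2 * (2 / π * (m * x)) := by ring
  nlinarith [mul_le_mul_of_nonneg_left h2 hm]

lemma cos_lb {y : ℝ} : 1 - y ^ 2 / 2 ≤ Real.cos y := Real.one_sub_sq_div_two_le_cos

lemma L3 {n : ℕ} (hn : 4 ≤ n) : ((n : ℝ) / 2) * Real.sin (π / n) ≤ 2 * Real.cos (π / n) := by
  rcases eq_or_lt_of_le hn with h4 | h5
  · subst h4
    have h : (π / ((4:ℕ):ℝ)) = π / 4 := by norm_num
    rw [h, Real.sin_pi_div_four, Real.cos_pi_div_four]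
    ring_nf
    exact le_rfl
  · have hn5 : (5:ℝ) ≤ n := by exact_mod_cast h5
    have hn0 : (0:ℝ) < n := by linarith
    set x := π / n with hxdef
    clear_value x
    have hx0 : 0 < x := by rw [hxdef]; positivity
    have hx5 : x ≤ π / 5 := by
      rw [hxdef, div_le_div_iff₀ hn0 (by norm_num : (0:ℝ) < 5)]
      nlinarith [Real.pi_pos]
    have h1 : ((n:ℝ)/2) * Real.sin x ≤ π / 2 := by
      have hs : Real.sin x ≤ x := Real.sin_le hx0.le
      have : ((n:ℝ)/2) * x = π / 2 := by field_simp [hxdef]; rw [hxdef]; field_simp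
      nlinarith [Real.sin_nonneg_of_nonneg_of_le_pi hx0.le
        (by nlinarith [Real.pi_pos] : x ≤ π)]
    have h2 : π / 2 ≤ 2 * Real.cos x := by
      have hc : 1 - x ^ 2 / 2 ≤ Real.cos x := cos_lb
      have hpi1 : π < 3.1416 := by linarith [Real.pi_lt_d6]
      have hpi2 : (3.1415:ℝ) < π := by linarith [Real.pi_gt_d6]
      nlinarith
    linarith

lemma L4 {n : ℕ} (hn : n = 3 ∨ 5 ≤ n) :
    ((n : ℝ) / 2) * Real.sin (π / n) ≤
      2 * Real.cos (π / n / 2) * Real.cos (π / n) + Real.sin (π / n / 2) * Real.sin (π / n) := by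
  rcases hn with h3 | h5
  · subst h3
    have h : (π / ((3:ℕ):ℝ)) = π / 3 := by norm_num
    have h6 : π / 3 / 2 = π / 6 := by ring
    rw [h, h6, Real.sin_pi_div_three, Real.cos_pi_div_three, Real.sin_pi_div_six,
      Real.cos_pi_div_six]
    ring_nf
    exact le_rfl
  · have hn5 : (5:ℝ) ≤ n := by exact_mod_cast h5
    have hn0 : (0:ℝ) < n := by linarith
    set x := π / n with hxdef
    clear_value x
    have hx0 : 0 < x := by rw [hxdef]; positivity
    have hx5 : x ≤ π / 5 := by
      rw [hxdef, div_le_div_iff₀ hn0 (by norm_num : (0:ℝ) < 5)]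
      nlinarith [Real.pi_pos]
    have hpi1 : π < 3.1416 := by linarith [Real.pi_lt_d6]
    have hpi2 : (3.1415:ℝ) < π := by linarith [Real.pi_gt_d6]
    have hx63 : x ≤ 0.629 := by nlinarith
    have hx2 : x^2 ≤ 0.396 := by nlinarith
    have hx4 : x^4 ≤ 0.157 := by nlinarith [sq_nonneg x, sq_nonneg (x^2)]
    have p1 : (0:ℝ) ≤ 1 - (x/2)^2/2 := by nlinarith
    have p2 : (0:ℝ) ≤ 1 - x^2/2 := by nlinarith
    have q1 : (0:ℝ) ≤ x/2 - (x/2)^3/4 := by nlinarith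
    have q2 : (0:ℝ) ≤ x - x^3/4 := by nlinarith
    have hpoly : π/2 ≤ 2*((1 - (x/2)^2/2) * (1 - x^2/2)) + (x/2 - (x/2)^3/4) * (x - x^3/4) := by
      nlinarith [hx2, hx4, pow_nonneg hx0.le 6]
    have h1 : ((n:ℝ)/2) * Real.sin x ≤ π / 2 := by
      have hs : Real.sin x ≤ x := Real.sin_le hx0.le
      have : ((n:ℝ)/2) * x = π / 2 := by field_simp [hxdef]; rw [hxdef]; field_simp
      nlinarith [Real.sin_nonneg_of_nonneg_of_le_pi hx0.le (by linarith : x ≤ π)]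
    have hc1 : 1 - (x/2) ^ 2 / 2 ≤ Real.cos (x/2) := cos_lb
    have hc2 : 1 - x ^ 2 / 2 ≤ Real.cos x := cos_lb
    have hs1 : x/2 - (x/2) ^ 3 / 4 ≤ Real.sin (x/2) :=
      by
        have := Real.sin_gt_sub_cube (by linarith : (0:ℝ) < x/2)
        nlinarith [pow_pos (by linarith : (0:ℝ) < x/2) 3]
    have hs2 : x - x ^ 3 / 4 ≤ Real.sin x :=
      by
        have := Real.sin_gt_sub_cube hx0
        nlinarith [pow_pos hx0 3]
    have hcos2_nonneg : (0:ℝ) ≤ Real.cos (x/2) := by linarith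
    have hsin2_nonneg : (0:ℝ) ≤ Real.sin (x/2) := by linarith
    have hA : (1 - (x/2)^2/2) * (1 - x^2/2) ≤ Real.cos (x/2) * Real.cos x :=
      mul_le_mul hc1 hc2 p2 hcos2_nonneg
    have hB : (x/2 - (x/2)^3/4) * (x - x^3/4) ≤ Real.sin (x/2) * Real.sin x :=
      mul_le_mul hs1 hs2 q2 hsin2_nonneg
    have h2 : π / 2 ≤ 2 * Real.cos (x/2) * Real.cos x + Real.sin (x/2) * Real.sin x := by
      nlinarith [hA, hB, hpoly]
    linarith


lemma trig_main (n : ℕ) (hn : 3 ≤ n) (k : ℕ) (e : ℝ) (he1 : -1 ≤ e) (he2 : e ≤ 1)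
    (hd0 : 0 ≤ (k : ℝ) + e) (hdn : (k : ℝ) + e ≤ (n : ℝ) / 2) :
    ((k : ℝ) + e) * Real.sin (π / n) ≤
      (1 - e) * Real.sin (((k : ℝ) - 1) * (π / n))
        + (1 + e) * Real.sin (((k : ℝ) + 1) * (π / n)) := by
  have hn0 : (0:ℝ) < n := by positivity
  have hn3 : (3:ℝ) ≤ n := by exact_mod_cast hn
  set x := π / n with hxdef
  have hx0 : 0 < x := by rw [hxdef]; positivity
  have hxpi : x < π := by
    rw [hxdef]
    calc π / n ≤ π / 3 := by
          rw [div_le_div_iff₀ hn0 (by norm_num : (0:ℝ) < 3)]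
          nlinarith [Real.pi_pos]
      _ < π := by linarith [Real.pi_pos]
  have hsx : 0 < Real.sin x := Real.sin_pos_of_pos_of_lt_pi hx0 hxpi
  have hx3 : x ≤ π / 3 := by
    rw [hxdef, div_le_div_iff₀ hn0 (by norm_num : (0:ℝ) < 3)]
    nlinarith [Real.pi_pos]
  have hhalf : ((n:ℝ)/2) * x = π / 2 := by rw [hxdef]; field_simp
  rw [show ((k:ℝ) - 1) * x = (k:ℝ) * x - x by ring,
    show ((k:ℝ) + 1) * x = (k:ℝ) * x + x by ring, Real.sin_sub, Real.sin_add]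
  set K := (k : ℝ) with hKdef
  set S := Real.sin (K * x) with hSdef
  set C := Real.cos (K * x) with hCdef
  -- goal : (K + e) * sin x ≤ (1-e)*(S*cos x - C*sin x) + (1+e)*(S*cos x + C*sin x)
  rcases Nat.eq_zero_or_pos k with hk0 | hk1
  · subst hk0
    have hS : S = 0 := by simp [hSdef, hKdef]
    have hC : C = 1 := by simp [hCdef, hKdef]
    have hK0 : K = 0 := by rw [hKdef]; norm_num
    rw [hS, hC, hK0]
    have he0 : 0 ≤ e := by rw [hK0] at hd0; linarith
    nlinarith [mul_nonneg he0 hsx.le]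
  · have hk1' : (1:ℝ) ≤ K := by rw [hKdef]; exact_mod_cast hk1
    have hK1 : K - 1 ≤ (n:ℝ)/2 := by linarith
    by_cases h1 : 1 ≤ 2 * C
    · -- case 1 : use endpoint e = -1, claim2 with m = K - 1
      have hcm : (K - 1) * x ≤ π / 2 := by
        rw [← hhalf]
        exact mul_le_mul_of_nonneg_right hK1 hx0.le
      have hs := claim2 hx0 (by linarith : (0:ℝ) ≤ K - 1) hcm
      have hsin : Real.sin ((K - 1) * x) = S * Real.cos x - C * Real.sin x := by
        rw [show (K - 1) * x = K * x - x by ring, Real.sin_sub, hSdef, hCdef]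
      rw [hsin] at hs
      have hprod : 0 ≤ (1 + e) * ((2 * C - 1) * Real.sin x) :=
        mul_nonneg (by linarith) (mul_nonneg (by linarith) hsx.le)
      nlinarith [hs, hprod]
    · push_neg at h1
      by_cases h2 : K + 1 ≤ (n:ℝ)/2
      · have hcm : (K + 1) * x ≤ π / 2 := by
          rw [← hhalf]
          exact mul_le_mul_of_nonneg_right h2 hx0.le
        have hs := claim2 hx0 (by linarith : (0:ℝ) ≤ K + 1) hcm
        have hsin : Real.sin ((K + 1) * x) = S * Real.cos x + C * Real.sin x := by
          rw [show (K + 1) * x = K * x + x by ring, Real.sin_add, hSdef, hCdef]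
        rw [hsin] at hs
        have hprod : 0 ≤ (1 - e) * ((1 - 2 * C) * Real.sin x) :=
          mul_nonneg (by linarith) (mul_nonneg (by linarith) hsx.le)
        nlinarith [hs, hprod]
      · push_neg at h2
        have hint : 2 * k = n - 1 ∨ 2 * k = n ∨ 2 * k = n + 1 ∨ 2 * k = n + 2 := by
          have l1 : (n:ℝ) < 2 * K + 2 := by linarith
          have l2 : 2 * K ≤ (n:ℝ) + 2 := by linarith
          rw [hKdef] at l1 l2
          have l1' : n < 2 * k + 2 := by exact_mod_cast l1
          have l2' : 2 * k ≤ n + 2 := by exact_mod_cast l2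
          omega
        rcases hint with hc | hc | hc | hc
        · -- 2k = n - 1, n odd
          have hcK : 2 * K = (n:ℝ) - 1 := by
            rw [hKdef]
            have : ((2 * k : ℕ) : ℝ) = ((n - 1 : ℕ) : ℝ) := by rw [hc]
            push_cast [Nat.cast_sub (by omega : 1 ≤ n)] at this
            linarith
          have hKx : K * x = π / 2 - x / 2 := by
            linear_combination (x/2) * hcK + hhalf
          have hS' : S = Real.cos (x/2) := by
            rw [hSdef, hKx, Real.sin_pi_div_two_sub]
          have hC' : C = Real.sin (x/2) := by
            rw [hCdef, hKx, Real.cos_pi_div_two_sub]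
          have hnodd : n = 3 ∨ 5 ≤ n := by omega
          have hL4 := L4 hnodd
          rw [← hxdef] at hL4
          have he0 : e ≤ 1/2 := by linarith
          have hs2half : Real.sin (x/2) ≤ 1/2 := by
            have : Real.sin (x/2) ≤ Real.sin (π/6) := by
              apply Real.sin_le_sin_of_le_of_le_pi_div_two (by linarith) (by linarith [Real.pi_pos])
              rw [hxdef]
              rw [div_le_div_iff₀ (by norm_num : (0:ℝ) < 2) (by norm_num : (0:ℝ) < 6)]
              calc π / n * 6 ≤ π / 3 * 6 := by
                    have : π / n ≤ π / 3 := by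
                      rw [div_le_div_iff₀ hn0 (by norm_num : (0:ℝ) < 3)]
                      nlinarith [Real.pi_pos]
                    linarith
                _ = π * 2 := by ring
            rw [Real.sin_pi_div_six] at this
            exact this
          have hprod : 0 ≤ (1/2 - e) * ((1 - 2 * Real.sin (x/2)) * Real.sin x) :=
            mul_nonneg (by linarith) (mul_nonneg (by linarith) hsx.le)
          have hKval : K = (n:ℝ)/2 - 1/2 := by linarith
          rw [hS', hC']
          nlinarith [hL4, hprod]
        · -- 2k = n
          have hcK : 2 * K = (n:ℝ) := by
            rw [hKdef]; exact_mod_cast congrArg (Nat.cast : ℕ → ℝ) hc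
          have hKx : K * x = π / 2 := by
            linear_combination (x/2) * hcK + hhalf
          have hS' : S = 1 := by rw [hSdef, hKx, Real.sin_pi_div_two]
          have hC' : C = 0 := by rw [hCdef, hKx, Real.cos_pi_div_two]
          have hn4 : 4 ≤ n := by omega
          have hL3 := L3 hn4
          rw [← hxdef] at hL3
          have hcos0 : 0 ≤ Real.cos x := by
            apply Real.cos_nonneg_of_mem_Icc
            constructor
            · nlinarith [Real.pi_pos]
            · nlinarith [Real.pi_pos]
          rw [hS', hC']
          have : ((K:ℝ) + e) * Real.sin x ≤ ((n:ℝ)/2) * Real.sin x :=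
            mul_le_mul_of_nonneg_right hdn hsx.le
          nlinarith [hL3]
        · -- 2k = n + 1, n odd
          have hcK : 2 * K = (n:ℝ) + 1 := by
            rw [hKdef]; exact_mod_cast congrArg (Nat.cast : ℕ → ℝ) hc
          have hKx : K * x = π / 2 + x / 2 := by
            linear_combination (x/2) * hcK + hhalf
          have hS' : S = Real.cos (x/2) := by
            rw [hSdef, hKx, Real.sin_add, Real.sin_pi_div_two, Real.cos_pi_div_two]
            ring
          have hC' : C = -Real.sin (x/2) := by
            rw [hCdef, hKx, Real.cos_add, Real.sin_pi_div_two, Real.cos_pi_div_two]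
            ring
          have hnodd : n = 3 ∨ 5 ≤ n := by omega
          have hL4 := L4 hnodd
          rw [← hxdef] at hL4
          have he0 : e ≤ -1/2 := by linarith
          have hsin2 : 0 ≤ Real.sin (x/2) :=
            Real.sin_nonneg_of_nonneg_of_le_pi (by linarith) (by linarith)
          have f1 : (1/2 + e) * Real.sin x ≤ 0 :=
            mul_nonpos_of_nonpos_of_nonneg (by linarith) hsx.le
          have f2 : 0 ≤ (-1 - 2*e) * (Real.sin (x/2) * Real.sin x) :=
            mul_nonneg (by linarith) (mul_nonneg hsin2 hsx.le)
          rw [hS', hC']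
          nlinarith [hL4, f1, f2]
        · -- 2k = n + 2 : forces e = -1
          have hcK : 2 * K = (n:ℝ) + 2 := by
            rw [hKdef]; exact_mod_cast congrArg (Nat.cast : ℕ → ℝ) hc
          have hem : e ≤ -1 := by linarith
          have hee : e = -1 := le_antisymm hem he1
          have hcm : (K - 1) * x ≤ π / 2 := by
            rw [← hhalf]
            exact mul_le_mul_of_nonneg_right hK1 hx0.le
          have hs := claim2 hx0 (by linarith : (0:ℝ) ≤ K - 1) hcm
          have hsin : Real.sin ((K - 1) * x) = S * Real.cos x - C * Real.sin x := by
            rw [show (K - 1) * x = K * x - x by ring, Real.sin_sub, hSdef, hCdef]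
          rw [hsin] at hs
          rw [hee]
          nlinarith [hs]


lemma lower {n : ℕ} (hn : 3 ≤ n) {s t : ℝ} (hst : s ≤ t) (hht : t - s ≤ (n : ℝ) / 2) :
    (t - s) / 2 ≤ dist (polyBd n s) (polyBd n t) := by
  have hsx := sinx_pos hn
  have hab : ⌊s⌋ ≤ ⌊t⌋ := Int.floor_le_floor hst
  set a : ℤ := ⌊s⌋ with hadef
  set b : ℤ := ⌊t⌋ with hbdef
  set u₁ : ℝ := Int.fract s with hu1def
  set u₂ : ℝ := Int.fract t with hu2def
  set k : ℕ := (b - a).toNat with hkdef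
  have hk : (k : ℝ) = (b : ℝ) - (a : ℝ) := by
    rw [hkdef]
    rw [show ((((b - a).toNat : ℕ)) : ℝ) = (((b - a).toNat : ℤ) : ℝ) by push_cast; ring]
    rw [Int.toNat_of_nonneg (by omega : (0:ℤ) ≤ b - a)]
    push_cast; ring
  have hs_eq : s = (a : ℝ) + u₁ := by rw [hadef, hu1def, Int.floor_add_fract]
  have ht_eq : t = (b : ℝ) + u₂ := by rw [hbdef, hu2def, Int.floor_add_fract]
  have hts : t - s = (k : ℝ) + (u₂ - u₁) := by rw [hk, hs_eq, ht_eq]; ring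
  have h1 : 0 ≤ u₁ := Int.fract_nonneg s
  have h2 : u₁ < 1 := Int.fract_lt_one s
  have h3 : 0 ≤ u₂ := Int.fract_nonneg t
  have h4 : u₂ < 1 := Int.fract_lt_one t
  have main := trig_main n hn k (u₂ - u₁) (by linarith) (by linarith)
    (by linarith [hts]) (by linarith [hts, hht])
  have proj := proj_id n a b u₁ u₂
  rw [show ((b:ℝ) - a - 1) = ((k:ℝ) - 1) by rw [hk],
    show ((b:ℝ) - a + 1) = ((k:ℝ) + 1) by rw [hk]] at proj
  have step : (t - s) * Real.sin (π / n) ≤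
      (1 + u₁ - u₂) * Real.sin (((k:ℝ) - 1) * (π / n))
        + (1 - u₁ + u₂) * Real.sin (((k:ℝ) + 1) * (π / n)) := by
    rw [hts]
    linarith [main]
  have hfinal : (t - s) / 2 ≤ (1 / (2 * Real.sin (π / n))) *
      ((1 + u₁ - u₂) * Real.sin (((k:ℝ) - 1) * (π / n))
        + (1 - u₁ + u₂) * Real.sin (((k:ℝ) + 1) * (π / n))) := by
    calc (t - s) / 2 = (1 / (2 * Real.sin (π / n))) * ((t - s) * Real.sin (π / n)) := by
          field_simp
      _ ≤ _ := mul_le_mul_of_nonneg_left step (by positivity)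
  calc (t - s) / 2 ≤ _ := hfinal
    _ ≤ dist ((1 - u₁) • polyVtx n a + u₁ • polyVtx n (a + 1))
          ((1 - u₂) • polyVtx n b + u₂ • polyVtx n (b + 1)) := proj
    _ = dist (polyBd n s) (polyBd n t) := rfl

end PolyAux

/-- For two points `A = polyBd n s`, `B = polyBd n t` on the boundary of a regular
`n`-gon of side length one, the chord length `d = |AB|` satisfies
`C · min{l₁, l₂} ≤ d ≤ min{l₁, l₂}` where `l₁ = t - s` and `l₂ = n - (t - s)` are the
lengths of the two boundary paths joining `A` and `B`, with an absolute constant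
`C > 0` independent of `n`. -/
theorem stmt_0 :
    ∃ C : ℝ, 0 < C ∧ ∀ n : ℕ, 3 ≤ n → ∀ s t : ℝ, 0 ≤ s → s ≤ t → t ≤ n →
      C * min (t - s) ((n : ℝ) - (t - s)) ≤ dist (polyBd n s) (polyBd n t) ∧
      dist (polyBd n s) (polyBd n t) ≤ min (t - s) ((n : ℝ) - (t - s)) := by
  refine ⟨1/2, by norm_num, ?_⟩
  intro n hn s t hs hst htn
  have hper : polyBd n (s + n) = polyBd n s := PolyAux.polyBd_periodic hn s
  have hts' : t ≤ s + n := by linarith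
  have hd2 : dist (polyBd n s) (polyBd n t) = dist (polyBd n t) (polyBd n (s + n)) := by
    rw [hper, dist_comm]
  rcases le_total (t - s) ((n : ℝ) - (t - s)) with h | h
  · rw [min_eq_left h]
    constructor
    · have := PolyAux.lower hn hst (by linarith : t - s ≤ (n:ℝ)/2)
      linarith
    · exact PolyAux.lip hn hst
  · rw [min_eq_right h]
    constructor
    · have := PolyAux.lower hn hts' (by linarith : (s + n) - t ≤ (n:ℝ)/2)
      rw [← hd2] at this
      linarith
    · have := PolyAux.lip hn hts'
      rw [← hd2] at this
      linarith
end

section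
/- Let x be a vertex of a semiplanar graph incident to a face σ of degree k ≥ 43, with nonnegative combinatorial curvature Φ(x) ≥ 0. Then Φ(x) ≥ 1/k. Consequently, summing over all k vertices incident to σ, Σ_{x∈σ} Φ(x) ≥ 1. -/
private lemma inv_le_third {a : ℕ} (ha : 3 ≤ a) : (1:ℝ)/a ≤ 1/3 := by
  apply one_div_le_one_div_of_le (by norm_num)
  exact_mod_cast ha

private lemma inv_le_seventh {a : ℕ} (ha : 7 ≤ a) : (1:ℝ)/a ≤ 1/7 := by
  apply one_div_le_one_div_of_le (by norm_num)
  exact_mod_cast ha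

private lemma two_faces (a b : ℕ) (ha : 3 ≤ a) (hb : 3 ≤ b)
    (h : (1:ℝ)/2 - 1/43 ≤ 1/a + 1/b) : (1:ℝ)/2 ≤ 1/a + 1/b := by
  wlog hab : a ≤ b generalizing a b
  · rw [add_comm]
    exact this b a hb ha (by linarith) (by omega)
  have ha6 : a ≤ 6 := by
    by_contra hca
    have h7a : 7 ≤ a := by omega
    have h7b : 7 ≤ b := by omega
    have := inv_le_seventh h7a
    have := inv_le_seventh h7b
    linarith
  interval_cases a
  · -- a = 3
    have hb6 : b ≤ 6 := by
      by_contra hcb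
      have := inv_le_seventh (show 7 ≤ b by omega)
      push_cast at h
      linarith
    interval_cases b <;> norm_num
  · -- a = 4
    have hb4 : b ≤ 4 := by
      by_contra hcb
      have : (1:ℝ)/b ≤ 1/5 := by
        apply one_div_le_one_div_of_le (by norm_num)
        exact_mod_cast (show 5 ≤ b by omega)
      push_cast at h
      linarith
    interval_cases b <;> norm_num
  · -- a = 5
    have hb3 : b ≤ 3 := by
      by_contra hcb
      have : (1:ℝ)/b ≤ 1/4 := by
        apply one_div_le_one_div_of_le (by norm_num)
        exact_mod_cast (show 4 ≤ b by omega)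
      push_cast at h
      linarith
    omega
  · -- a = 6
    have hb3 : b ≤ 3 := by
      by_contra hcb
      have : (1:ℝ)/b ≤ 1/4 := by
        apply one_div_le_one_div_of_le (by norm_num)
        exact_mod_cast (show 4 ≤ b by omega)
      push_cast at h
      linarith
    omega

private lemma three_faces (a b c : ℕ) (ha : 3 ≤ a) (hb : 3 ≤ b) (hc : 3 ≤ c)
    (h : (1:ℝ) - 1/43 ≤ 1/a + 1/b + 1/c) : (1:ℝ) ≤ 1/a + 1/b + 1/c := by
  have ha' := inv_le_third ha
  have hb' := inv_le_third hb
  have hc' := inv_le_third hc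
  have ea : a = 3 := by
    by_contra hca
    have : (1:ℝ)/a ≤ 1/4 := by
      apply one_div_le_one_div_of_le (by norm_num)
      exact_mod_cast (show 4 ≤ a by omega)
    linarith
  have eb : b = 3 := by
    by_contra hcb
    have : (1:ℝ)/b ≤ 1/4 := by
      apply one_div_le_one_div_of_le (by norm_num)
      exact_mod_cast (show 4 ≤ b by omega)
    linarith
  have ec : c = 3 := by
    by_contra hcc
    have : (1:ℝ)/c ≤ 1/4 := by
      apply one_div_le_one_div_of_le (by norm_num)
      exact_mod_cast (show 4 ≤ c by omega)
    linarith
  subst ea; subst eb; subst ec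
  norm_num

private lemma key (k : ℕ) (hk : 43 ≤ k) (D : ℕ) (hD : 3 ≤ D) (m : Fin D → ℕ)
    (hm : ∀ i, 3 ≤ m i) (i₀ : Fin D) (h0 : m i₀ = k)
    (hpos : 0 ≤ 1 - (D:ℝ)/2 + ∑ i, (1:ℝ)/(m i)) :
    (1:ℝ)/k ≤ 1 - (D:ℝ)/2 + ∑ i, (1:ℝ)/(m i) := by
  have hk43 : (1:ℝ)/k ≤ 1/43 := by
    apply one_div_le_one_div_of_le (by norm_num)
    exact_mod_cast hk
  have hkpos : (0:ℝ) < 1/k := by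
    apply one_div_pos.mpr
    exact_mod_cast (show 0 < k by omega)
  have hsplit : ∑ i, (1:ℝ)/(m i)
      = 1/k + ∑ i ∈ Finset.univ.erase i₀, (1:ℝ)/(m i) := by
    rw [← Finset.add_sum_erase _ _ (Finset.mem_univ i₀), h0]
  have hcard : (Finset.univ.erase i₀).card = D - 1 := by
    rw [Finset.card_erase_of_mem (Finset.mem_univ i₀), Finset.card_univ,
      Fintype.card_fin]
  have hbound : ∑ i ∈ Finset.univ.erase i₀, (1:ℝ)/(m i)
      ≤ ((D:ℝ) - 1) * (1/3) := by
    calc ∑ i ∈ Finset.univ.erase i₀, (1:ℝ)/(m i)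
        ≤ (Finset.univ.erase i₀).card • ((1:ℝ)/3) := by
          apply Finset.sum_le_card_nsmul
          intro i _
          exact inv_le_third (hm i)
      _ = ((D:ℝ) - 1) * (1/3) := by
          rw [hcard, nsmul_eq_mul]
          congr 1
          have : (1:ℕ) ≤ D := by omega
          push_cast [Nat.cast_sub this]
          ring
  have hD4 : D ≤ 4 := by
    by_contra hc
    have h5 : (5:ℝ) ≤ D := by exact_mod_cast (show 5 ≤ D by omega)
    rw [hsplit] at hpos
    linarith
  interval_cases D
  · -- D = 3
    fin_cases i₀
    · rw [Fin.sum_univ_three] at hpos ⊢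
      rw [show m 0 = k from h0] at hpos ⊢
      push_cast at hpos ⊢
      have := two_faces (m 1) (m 2) (hm 1) (hm 2) (by linarith)
      linarith
    · rw [Fin.sum_univ_three] at hpos ⊢
      rw [show m 1 = k from h0] at hpos ⊢
      push_cast at hpos ⊢
      have := two_faces (m 0) (m 2) (hm 0) (hm 2) (by linarith)
      linarith
    · rw [Fin.sum_univ_three] at hpos ⊢
      rw [show m 2 = k from h0] at hpos ⊢
      push_cast at hpos ⊢
      have := two_faces (m 0) (m 1) (hm 0) (hm 1) (by linarith)
      linarith
  · -- D = 4
    fin_cases i₀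
    · rw [Fin.sum_univ_four] at hpos ⊢
      rw [show m 0 = k from h0] at hpos ⊢
      push_cast at hpos ⊢
      have := three_faces (m 1) (m 2) (m 3) (hm 1) (hm 2) (hm 3) (by linarith)
      linarith
    · rw [Fin.sum_univ_four] at hpos ⊢
      rw [show m 1 = k from h0] at hpos ⊢
      push_cast at hpos ⊢
      have := three_faces (m 0) (m 2) (m 3) (hm 0) (hm 2) (hm 3) (by linarith)
      linarith
    · rw [Fin.sum_univ_four] at hpos ⊢
      rw [show m 2 = k from h0] at hpos ⊢
      push_cast at hpos ⊢
      have := three_faces (m 0) (m 1) (m 3) (hm 0) (hm 1) (hm 3) (by linarith)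
      linarith
    · rw [Fin.sum_univ_four] at hpos ⊢
      rw [show m 3 = k from h0] at hpos ⊢
      push_cast at hpos ⊢
      have := three_faces (m 0) (m 1) (m 2) (hm 0) (hm 1) (hm 2) (by linarith)
      linarith

/-- Let `σ` be a face of degree `k ≥ 43` of a semiplanar graph with nonnegative
combinatorial curvature, with incident vertices `v : Fin k`, where vertex `v` has degree
`d v ≥ 3` and is incident to faces of degrees `n v i ≥ 3`, one of which is `σ` itself
(so `n v i = k` for some `i`). If the curvature `Φ v = 1 − (d v)/2 + Σᵢ 1/(n v i)`
is nonnegative at each vertex, then `Φ v ≥ 1/k` for every `v`, and consequently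
`Σ_{v ∈ σ} Φ v ≥ 1`. -/
theorem stmt_7 (k : ℕ) (hk : 43 ≤ k)
    (d : Fin k → ℕ) (hd : ∀ v, 3 ≤ d v)
    (n : (v : Fin k) → Fin (d v) → ℕ) (hn : ∀ v i, 3 ≤ n v i)
    (hσ : ∀ v, ∃ i, n v i = k)
    (Φ : Fin k → ℝ) (hΦ : ∀ v, Φ v = 1 - (d v : ℝ) / 2 + ∑ i, (1 : ℝ) / n v i)
    (hnonneg : ∀ v, 0 ≤ Φ v) :
    (∀ v, (1 : ℝ) / k ≤ Φ v) ∧ 1 ≤ ∑ v, Φ v := by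
  have hmain : ∀ v, (1 : ℝ) / k ≤ Φ v := by
    intro v
    obtain ⟨i₀, hi₀⟩ := hσ v
    rw [hΦ v]
    exact key k hk (d v) (hd v) (n v) (hn v) i₀ hi₀ (by rw [← hΦ v]; exact hnonneg v)
  refine ⟨hmain, ?_⟩
  have hk0 : (k:ℝ) ≠ 0 := by
    exact_mod_cast (show k ≠ 0 by omega)
  calc (1:ℝ) = ∑ _v : Fin k, (1:ℝ)/k := by
        rw [Finset.sum_const, Finset.card_univ, Fintype.card_fin, nsmul_eq_mul]
        field_simp
    _ ≤ ∑ v, Φ v := Finset.sum_le_sum fun v _ => hmain v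
end

section
/- There are exactly 17 multisets of integers {n₁,…,n_d} with d ≥ 3, each nᵢ ≥ 3, satisfying Σᵢ 1/nᵢ = d/2 − 1: namely {3,7,42}, {3,8,24}, {3,9,18}, {3,10,15}, {3,12,12}, {4,5,20}, {4,6,12}, {4,8,8}, {5,5,10}, {6,6,6}, {3,3,4,12}, {3,3,6,6}, {3,4,4,6}, {4,4,4,4}, {3,3,3,3,6}, {3,3,3,4,4}, {3,3,3,3,3,3}. -/
set_option maxHeartbeats 4000000 in
/-- There are exactly 17 multisets of integers `{n₁, …, n_d}` with `d ≥ 3`, each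
`nᵢ ≥ 3`, satisfying `Σᵢ 1/nᵢ = d/2 − 1` (the vanishing combinatorial curvature
condition at a vertex of degree `d` with incident face degrees `nᵢ`). -/
theorem stmt_9 :
    {m : Multiset ℕ | 3 ≤ Multiset.card m ∧ (∀ n ∈ m, 3 ≤ n) ∧
        (m.map fun n => (1 : ℝ) / n).sum = (Multiset.card m : ℝ) / 2 - 1} =
      {({3, 7, 42} : Multiset ℕ), {3, 8, 24}, {3, 9, 18}, {3, 10, 15}, {3, 12, 12},
        {4, 5, 20}, {4, 6, 12}, {4, 8, 8}, {5, 5, 10}, {6, 6, 6},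
        {3, 3, 4, 12}, {3, 3, 6, 6}, {3, 4, 4, 6}, {4, 4, 4, 4},
        {3, 3, 3, 3, 6}, {3, 3, 3, 4, 4}, {3, 3, 3, 3, 3, 3}} := by
  ext m
  simp only [Set.mem_setOf_eq, Set.mem_insert_iff, Set.mem_singleton_iff]
  constructor
  · rintro ⟨hcard, hmem, hsum⟩
    obtain ⟨l, hl, rfl⟩ : ∃ l : List ℕ, l.Pairwise (· ≤ ·) ∧ ↑l = m :=
      ⟨m.sort (· ≤ ·), m.pairwise_sort _, m.sort_eq _⟩
    simp only [bind_pure_comp, Multiset.fmap_def, Multiset.map_coe, Multiset.sum_coe,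
      Multiset.coe_card, List.map_map, Function.comp_def] at hsum
    have hlen3 : 3 ≤ l.length := by simpa using hcard
    have hmem' : ∀ n ∈ l, 3 ≤ n := by simpa using hmem
    -- pass to rationals
    have key : ∀ t : List ℕ, ((t.map (fun n : ℕ => (1:ℚ)/n)).sum : ℝ)
        = (t.map (fun n : ℕ => (1:ℝ)/n)).sum := by
      intro t
      induction t with
      | nil => simp
      | cons a s ih => push_cast [List.map_cons, List.sum_cons, ← ih]; ring
    have hq : (l.map (fun n : ℕ => (1:ℚ)/n)).sum = (l.length : ℚ)/2 - 1 := by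
      refine Rat.cast_injective (α := ℝ) ?_
      rw [key l, hsum]
      push_cast
      ring
    -- the length is at most 6
    have hle : (l.map (fun n : ℕ => (1:ℚ)/n)).sum ≤ (l.length : ℚ) * (1/3) := by
      have h := List.sum_le_card_nsmul (l.map (fun n : ℕ => (1:ℚ)/n)) (1/3) ?_
      · simpa [mul_comm] using h
      · intro x hx
        simp only [List.mem_map] at hx
        obtain ⟨n, hn, rfl⟩ := hx
        have h3 := hmem' n hn
        rw [div_le_div_iff₀ (by positivity) (by norm_num)]
        exact_mod_cast by omega
    have hlen6 : l.length ≤ 6 := by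
      rw [hq] at hle
      have : (l.length : ℚ) ≤ 6 := by linarith
      exact_mod_cast this
    clear hle hcard hmem hsum
    obtain _ | ⟨a, _ | ⟨b, _ | ⟨c, _ | ⟨d, _ | ⟨e, _ | ⟨f, _ | ⟨g, t⟩⟩⟩⟩⟩⟩⟩ := l
    · simp at hlen3
    · simp at hlen3
    · simp at hlen3
    -- length 3
    · clear hlen3 hlen6
      simp only [List.pairwise_cons] at hl
      obtain ⟨p1, p2, -⟩ := hl
      have hab : a ≤ b := p1 b (by simp)
      have hac : a ≤ c := p1 c (by simp)
      have hbc : b ≤ c := p2 c (by simp)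
      have ha : 3 ≤ a := hmem' a (by simp)
      have hb : 3 ≤ b := hmem' b (by simp)
      have hc : 3 ≤ c := hmem' c (by simp)
      simp only [List.map_cons, List.map_nil, List.sum_cons, List.sum_nil,
        List.length_cons, List.length_nil] at hq
      have ha0 : (a:ℚ) ≠ 0 := by positivity
      have hb0 : (b:ℚ) ≠ 0 := by positivity
      have hc0 : (c:ℚ) ≠ 0 := by positivity
      field_simp at hq
      have E : a*(b*c) = 2*(b*c)+2*(a*c)+2*(a*b) := by
        have EQ : (a:ℚ)*(b*c) = 2*(b*c)+2*(a*c)+2*(a*b) := by push_cast at hq; linarith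
        exact_mod_cast EQ
      have h1 : a*c ≤ b*c := Nat.mul_le_mul_right c hab
      have h2 : a*b ≤ b*c := Nat.mul_le_mul hab hbc
      have h4 : a*b ≤ a*c := Nat.mul_le_mul_left a hbc
      have ha6 : a ≤ 6 := by
        have h3 : a*(b*c) ≤ 6*(b*c) := by linarith
        exact Nat.le_of_mul_le_mul_right h3 (by positivity)
      have hb4 : b ≤ 4*a := by
        have h5 : 3*(b*c) ≤ a*(b*c) := Nat.mul_le_mul_right _ ha
        have h6 : b*c ≤ (4*a)*c := by linarith
        exact Nat.le_of_mul_le_mul_right h6 (by positivity)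
      clear h1 h2 h4 hq ha0 hb0 hc0 hmem' hac
      interval_cases a <;> interval_cases b <;>
        first
          | omega
          | (have hc42 : c ≤ 42 := by omega
             interval_cases c <;> first | omega | decide)
    -- length 4
    · clear hlen3 hlen6
      simp only [List.pairwise_cons] at hl
      obtain ⟨p1, p2, p3, -⟩ := hl
      have hab : a ≤ b := p1 b (by simp)
      have hbc : b ≤ c := p2 c (by simp)
      have hcd : c ≤ d := p3 d (by simp)
      have ha : 3 ≤ a := hmem' a (by simp)
      have hb : 3 ≤ b := hmem' b (by simp)
      have hc : 3 ≤ c := hmem' c (by simp)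
      have hd : 3 ≤ d := hmem' d (by simp)
      simp only [List.map_cons, List.map_nil, List.sum_cons, List.sum_nil,
        List.length_cons, List.length_nil] at hq
      have ha0 : (a:ℚ) ≠ 0 := by positivity
      have hb0 : (b:ℚ) ≠ 0 := by positivity
      have hc0 : (c:ℚ) ≠ 0 := by positivity
      have hd0 : (d:ℚ) ≠ 0 := by positivity
      field_simp at hq
      have E : a*(b*(c*d)) = b*(c*d) + a*(c*d) + a*(b*d) + a*(b*c) := by
        have EQ : (a:ℚ)*(b*(c*d)) = b*(c*d) + a*(c*d) + a*(b*d) + a*(b*c) := by push_cast at hq; linarith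
        exact_mod_cast EQ
      clear hq ha0 hb0 hc0 hd0 hmem'
      have had : a ≤ d := hab.trans (hbc.trans hcd)
      have hac : a ≤ c := hab.trans hbc
      have h1 : a*(c*d) ≤ b*(c*d) := Nat.mul_le_mul_right _ hab
      have h2 : a*(b*d) ≤ b*(c*d) := by
        calc a*(b*d) = b*(a*d) := by ring
        _ ≤ b*(c*d) := Nat.mul_le_mul_left _ (Nat.mul_le_mul hac le_rfl)
      have h3 : a*(b*c) ≤ b*(c*d) := by
        calc a*(b*c) = b*(c*a) := by ring
        _ ≤ b*(c*d) := Nat.mul_le_mul_left _ (Nat.mul_le_mul_left _ had)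
      have ha4 : a ≤ 4 := by
        have h5 : a*(b*(c*d)) ≤ 4*(b*(c*d)) := by linarith
        exact Nat.le_of_mul_le_mul_right h5 (by positivity)
      have h6 : 3*(b*(c*d)) ≤ a*(b*(c*d)) := Nat.mul_le_mul_right _ ha
      have h7 : a*(b*d) ≤ a*(c*d) := by
        calc a*(b*d) = a*(d*b) := by ring
        _ ≤ a*(d*c) := Nat.mul_le_mul_left _ (Nat.mul_le_mul_left _ hbc)
        _ = a*(c*d) := by ring
      have h8 : a*(b*c) ≤ a*(c*d) := by
        calc a*(b*c) = a*(c*b) := by ring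
        _ ≤ a*(c*d) := Nat.mul_le_mul_left _ (Nat.mul_le_mul_left _ (hbc.trans hcd))
      have hb6 : b ≤ 6 := by
        have h9 : 2*(b*(c*d)) ≤ 3*(a*(c*d)) := by linarith
        have h10 : (2*b)*(c*d) ≤ (2*6)*(c*d) := by nlinarith
        have := Nat.le_of_mul_le_mul_right h10 (by positivity : 0 < c*d)
        omega
      have hc6 : c ≤ 6 := by
        have h10 : a*(b*c) ≤ a*(b*d) := Nat.mul_le_mul_left _ (Nat.mul_le_mul_left _ hcd)
        have h11 : 3*(b*(c*d)) ≤ a*(b*(c*d)) := Nat.mul_le_mul_right _ ha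
        have h12 : 3*(a*(c*d)) ≤ b*(a*(c*d)) := Nat.mul_le_mul_right _ hb
        have h13 : c*(a*(b*d)) ≤ 6*(a*(b*d)) := by nlinarith
        exact Nat.le_of_mul_le_mul_right h13 (by positivity)
      clear h1 h2 h3 h6 h7 h8 had hac
      interval_cases a <;> interval_cases b <;> interval_cases c <;>
        first
          | omega
          | (have hd12 : d ≤ 12 := by omega
             interval_cases d <;> first | omega | decide)
    -- length 5
    · clear hlen3 hlen6
      simp only [List.pairwise_cons] at hl
      obtain ⟨p1, p2, p3, p4, -⟩ := hl
      have hab : a ≤ b := p1 b (by simp)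
      have hbc : b ≤ c := p2 c (by simp)
      have hcd : c ≤ d := p3 d (by simp)
      have hde : d ≤ e := p4 e (by simp)
      have ha : 3 ≤ a := hmem' a (by simp)
      have hb : 3 ≤ b := hmem' b (by simp)
      have hc : 3 ≤ c := hmem' c (by simp)
      have hd : 3 ≤ d := hmem' d (by simp)
      have he : 3 ≤ e := hmem' e (by simp)
      simp only [List.map_cons, List.map_nil, List.sum_cons, List.sum_nil,
        List.length_cons, List.length_nil] at hq
      have ha0 : (a:ℚ) ≠ 0 := by positivity
      have hb0 : (b:ℚ) ≠ 0 := by positivity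
      have hc0 : (c:ℚ) ≠ 0 := by positivity
      have hd0 : (d:ℚ) ≠ 0 := by positivity
      have he0 : (e:ℚ) ≠ 0 := by positivity
      field_simp at hq
      have E : 3*(a*(b*(c*(d*e)))) = 2*(b*(c*(d*e)) + a*(c*(d*e)) + a*(b*(d*e))
          + a*(b*(c*e)) + a*(b*(c*d))) := by
        have EQ : 3*((a:ℚ)*(b*(c*(d*e)))) = 2*(b*(c*(d*e)) + a*(c*(d*e)) + a*(b*(d*e))
            + a*(b*(c*e)) + a*(b*(c*d))) := by push_cast at hq; linarith
        exact_mod_cast EQ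
      clear hq ha0 hb0 hc0 hd0 he0 hmem'
      have hac : a ≤ c := hab.trans hbc
      have had : a ≤ d := hac.trans hcd
      have hae : a ≤ e := had.trans hde
      -- a = 3
      obtain rfl : a = 3 := by
        have h1 : a*(c*(d*e)) ≤ b*(c*(d*e)) := Nat.mul_le_mul_right _ hab
        have h2 : a*(b*(d*e)) ≤ b*(c*(d*e)) := by
          calc a*(b*(d*e)) = b*(a*(d*e)) := by ring
          _ ≤ b*(c*(d*e)) := Nat.mul_le_mul_left _ (Nat.mul_le_mul hac le_rfl)
        have h3 : a*(b*(c*e)) ≤ b*(c*(d*e)) := by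
          calc a*(b*(c*e)) = b*(c*(a*e)) := by ring
          _ ≤ b*(c*(d*e)) := by
            exact Nat.mul_le_mul_left _ (Nat.mul_le_mul_left _ (Nat.mul_le_mul had le_rfl))
        have h4 : a*(b*(c*d)) ≤ b*(c*(d*e)) := by
          calc a*(b*(c*d)) = b*(c*(d*a)) := by ring
          _ ≤ b*(c*(d*e)) := by
            exact Nat.mul_le_mul_left _ (Nat.mul_le_mul_left _ (Nat.mul_le_mul_left _ hae))
        have h5 : (3*a)*(b*(c*(d*e))) ≤ 10*(b*(c*(d*e))) := by linarith
        have := Nat.le_of_mul_le_mul_right h5 (by positivity)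
        omega
      -- b = 3
      obtain rfl : b = 3 := by
        have hbd : b ≤ d := hbc.trans hcd
        have hbe : b ≤ e := hbd.trans hde
        have h1 : b*(d*e) ≤ c*(d*e) := Nat.mul_le_mul_right _ hbc
        have h2 : b*(c*e) ≤ c*(d*e) := by
          calc b*(c*e) = c*(b*e) := by ring
          _ ≤ c*(d*e) := Nat.mul_le_mul_left _ (Nat.mul_le_mul hbd le_rfl)
        have h3 : b*(c*d) ≤ c*(d*e) := by
          calc b*(c*d) = c*(d*b) := by ring
          _ ≤ c*(d*e) := Nat.mul_le_mul_left _ (Nat.mul_le_mul_left _ hbe)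
        have h5 : (7*b)*(c*(d*e)) ≤ 24*(c*(d*e)) := by linarith
        have := Nat.le_of_mul_le_mul_right h5 (by positivity)
        omega
      -- c = 3
      obtain rfl : c = 3 := by
        have hce : c ≤ e := hcd.trans hde
        have h1 : c*e ≤ d*e := Nat.mul_le_mul_right _ hcd
        have h2 : c*d ≤ d*e := by
          calc c*d = d*c := by ring
          _ ≤ d*e := Nat.mul_le_mul_left _ hce
        have h5 : (5*c)*(d*e) ≤ 18*(d*e) := by linarith
        have := Nat.le_of_mul_le_mul_right h5 (by positivity)
        omega
      -- now d*e = 2*(d+e)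
      have E' : d*e = 2*(d+e) := by nlinarith
      have hd4 : d ≤ 4 := by
        have h5 : d*e ≤ 4*e := by linarith
        exact Nat.le_of_mul_le_mul_right (by linarith : d*e ≤ 4*e) (by positivity)
      interval_cases d <;>
        first
          | omega
          | (have he6 : e ≤ 6 := by omega
             interval_cases e <;> first | omega | decide)
    -- length 6
    · clear hlen3 hlen6
      simp only [List.pairwise_cons] at hl
      obtain ⟨p1, p2, p3, p4, p5, -⟩ := hl
      have hab : a ≤ b := p1 b (by simp)
      have hbc : b ≤ c := p2 c (by simp)
      have hcd : c ≤ d := p3 d (by simp)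
      have hde : d ≤ e := p4 e (by simp)
      have hef : e ≤ f := p5 f (by simp)
      have ha : 3 ≤ a := hmem' a (by simp)
      have hb : 3 ≤ b := hmem' b (by simp)
      have hc : 3 ≤ c := hmem' c (by simp)
      have hd : 3 ≤ d := hmem' d (by simp)
      have he : 3 ≤ e := hmem' e (by simp)
      have hf : 3 ≤ f := hmem' f (by simp)
      simp only [List.map_cons, List.map_nil, List.sum_cons, List.sum_nil,
        List.length_cons, List.length_nil] at hq
      have ha0 : (a:ℚ) ≠ 0 := by positivity
      have hb0 : (b:ℚ) ≠ 0 := by positivity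
      have hc0 : (c:ℚ) ≠ 0 := by positivity
      have hd0 : (d:ℚ) ≠ 0 := by positivity
      have he0 : (e:ℚ) ≠ 0 := by positivity
      have hf0 : (f:ℚ) ≠ 0 := by positivity
      field_simp at hq
      have E : 2*(a*(b*(c*(d*(e*f))))) = b*(c*(d*(e*f))) + a*(c*(d*(e*f))) + a*(b*(d*(e*f)))
          + a*(b*(c*(e*f))) + a*(b*(c*(d*f))) + a*(b*(c*(d*e))) := by
        have EQ : 2*((a:ℚ)*(b*(c*(d*(e*f))))) = b*(c*(d*(e*f))) + a*(c*(d*(e*f))) + a*(b*(d*(e*f)))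
            + a*(b*(c*(e*f))) + a*(b*(c*(d*f))) + a*(b*(c*(d*e))) := by push_cast at hq; linarith
        exact_mod_cast EQ
      clear hq ha0 hb0 hc0 hd0 he0 hf0 hmem'
      have hac : a ≤ c := hab.trans hbc
      have had : a ≤ d := hac.trans hcd
      have hae : a ≤ e := had.trans hde
      have haf : a ≤ f := hae.trans hef
      obtain rfl : a = 3 := by
        have h1 : a*(c*(d*(e*f))) ≤ b*(c*(d*(e*f))) := Nat.mul_le_mul_right _ hab
        have h2 : a*(b*(d*(e*f))) ≤ b*(c*(d*(e*f))) := by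
          calc a*(b*(d*(e*f))) = b*(a*(d*(e*f))) := by ring
          _ ≤ b*(c*(d*(e*f))) := Nat.mul_le_mul_left _ (Nat.mul_le_mul hac le_rfl)
        have h3 : a*(b*(c*(e*f))) ≤ b*(c*(d*(e*f))) := by
          calc a*(b*(c*(e*f))) = b*(c*(a*(e*f))) := by ring
          _ ≤ b*(c*(d*(e*f))) :=
            Nat.mul_le_mul_left _ (Nat.mul_le_mul_left _ (Nat.mul_le_mul had le_rfl))
        have h4 : a*(b*(c*(d*f))) ≤ b*(c*(d*(e*f))) := by
          calc a*(b*(c*(d*f))) = b*(c*(d*(a*f))) := by ring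
          _ ≤ b*(c*(d*(e*f))) :=
            Nat.mul_le_mul_left _ (Nat.mul_le_mul_left _
              (Nat.mul_le_mul_left _ (Nat.mul_le_mul hae le_rfl)))
        have h5 : a*(b*(c*(d*e))) ≤ b*(c*(d*(e*f))) := by
          calc a*(b*(c*(d*e))) = b*(c*(d*(e*a))) := by ring
          _ ≤ b*(c*(d*(e*f))) :=
            Nat.mul_le_mul_left _ (Nat.mul_le_mul_left _
              (Nat.mul_le_mul_left _ (Nat.mul_le_mul_left _ haf)))
        have h6 : (2*a)*(b*(c*(d*(e*f)))) ≤ 6*(b*(c*(d*(e*f)))) := by linarith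
        have := Nat.le_of_mul_le_mul_right h6 (by positivity)
        omega
      obtain rfl : b = 3 := by
        have hbd : b ≤ d := hbc.trans hcd
        have hbe : b ≤ e := hbd.trans hde
        have hbf : b ≤ f := hbe.trans hef
        have h1 : b*(d*(e*f)) ≤ c*(d*(e*f)) := Nat.mul_le_mul_right _ hbc
        have h2 : b*(c*(e*f)) ≤ c*(d*(e*f)) := by
          calc b*(c*(e*f)) = c*(b*(e*f)) := by ring
          _ ≤ c*(d*(e*f)) := Nat.mul_le_mul_left _ (Nat.mul_le_mul hbd le_rfl)
        have h3 : b*(c*(d*f)) ≤ c*(d*(e*f)) := by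
          calc b*(c*(d*f)) = c*(d*(b*f)) := by ring
          _ ≤ c*(d*(e*f)) :=
            Nat.mul_le_mul_left _ (Nat.mul_le_mul_left _ (Nat.mul_le_mul hbe le_rfl))
        have h4 : b*(c*(d*e)) ≤ c*(d*(e*f)) := by
          calc b*(c*(d*e)) = c*(d*(e*b)) := by ring
          _ ≤ c*(d*(e*f)) :=
            Nat.mul_le_mul_left _ (Nat.mul_le_mul_left _ (Nat.mul_le_mul_left _ hbf))
        have h6 : (5*b)*(c*(d*(e*f))) ≤ 15*(c*(d*(e*f))) := by linarith
        have := Nat.le_of_mul_le_mul_right h6 (by positivity)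
        omega
      obtain rfl : c = 3 := by
        have hce : c ≤ e := hcd.trans hde
        have hcf : c ≤ f := hce.trans hef
        have h1 : c*(e*f) ≤ d*(e*f) := Nat.mul_le_mul_right _ hcd
        have h2 : c*(d*f) ≤ d*(e*f) := by
          calc c*(d*f) = d*(c*f) := by ring
          _ ≤ d*(e*f) := Nat.mul_le_mul_left _ (Nat.mul_le_mul hce le_rfl)
        have h3 : c*(d*e) ≤ d*(e*f) := by
          calc c*(d*e) = d*(e*c) := by ring
          _ ≤ d*(e*f) := Nat.mul_le_mul_left _ (Nat.mul_le_mul_left _ hcf)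
        have h6 : (12*c)*(d*(e*f)) ≤ 36*(d*(e*f)) := by linarith
        have := Nat.le_of_mul_le_mul_right h6 (by positivity)
        omega
      obtain rfl : d = 3 := by
        have hdf : d ≤ f := hde.trans hef
        have h1 : d*f ≤ e*f := Nat.mul_le_mul_right _ hde
        have h2 : d*e ≤ e*f := by
          calc d*e = e*d := by ring
          _ ≤ e*f := Nat.mul_le_mul_left _ hdf
        have h6 : d*(e*f) ≤ 3*(e*f) := by nlinarith
        have := Nat.le_of_mul_le_mul_right h6 (by positivity)
        omega
      obtain rfl : e = 3 := by
        have h1 : 2*(e*f) ≤ 6*f := by nlinarith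
        have := Nat.le_of_mul_le_mul_right (by linarith : (2*e)*f ≤ 6*f) (by positivity : 0 < f)
        omega
      obtain rfl : f = 3 := by nlinarith
      decide
    · simp at hlen6; omega
  · rintro (rfl|rfl|rfl|rfl|rfl|rfl|rfl|rfl|rfl|rfl|rfl|rfl|rfl|rfl|rfl|rfl|rfl) <;>
      refine ⟨by decide, by decide, ?_⟩ <;>
      · simp [Multiset.insert_eq_cons]
        norm_num
end

section
/- Let (X,d) be a complete geodesic space satisfying the volume bound H²(B_R(p)) ≤ C·R² for all R ≥ 1 (quadratic volume growth), realized as the regular polygonal surface S(G) of a semiplanar graph G with nonnegative combinatorial curvature. Then the simple random walk on G is recurrent; equivalently, G is parabolic: every positive superharmonic function on G is constant. -/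
namespace Stmt19

/-- cutoff profile: 1 for `k ≤ N`, 0 for `k ≥ 2N`, linear in between. -/
noncomputable def phi (N k : ℕ) : ℝ := max 0 (min 1 ((2*N - (k:ℝ))/N))

lemma phi_nonneg (N k : ℕ) : 0 ≤ phi N k := le_max_left _ _

lemma phi_le_one (N k : ℕ) : phi N k ≤ 1 := by
  unfold phi
  rcases le_total ((min 1 ((2*N - (k:ℝ))/N))) 0 with h | h
  · simpa [max_eq_left h] using h.trans zero_le_one
  · rw [max_eq_right h]; exact min_le_left _ _

lemma phi_eq_one {N k : ℕ} (hN : 1 ≤ N) (h : k ≤ N) : phi N k = 1 := by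
  have hN' : (0:ℝ) < N := by exact_mod_cast hN
  have : (1:ℝ) ≤ (2*N - (k:ℝ))/N := by
    rw [le_div_iff₀ hN']
    have : (k:ℝ) ≤ N := by exact_mod_cast h
    linarith
  unfold phi
  rw [min_eq_left this, max_eq_right zero_le_one]

lemma phi_eq_zero {N k : ℕ} (h : 2*N ≤ k) : phi N k = 0 := by
  have h' : (2*(N:ℝ) - (k:ℝ)) ≤ 0 := by
    have : (2*(N:ℝ)) ≤ (k:ℝ) := by exact_mod_cast h
    linarith
  have hd : (2*N - (k:ℝ))/N ≤ 0 := div_nonpos_of_nonpos_of_nonneg h' (Nat.cast_nonneg N)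
  unfold phi
  rw [max_eq_left]
  exact le_trans (min_le_right _ _) hd

lemma abs_min_sub_min_le_abs (a b c : ℝ) : |min a c - min b c| ≤ |a - b| := by
  have h1 := le_abs_self (a - b)
  have h2 := neg_abs_le (a - b)
  rcases le_total a c with ha | ha <;> rcases le_total b c with hb | hb <;>
    rw [abs_le] <;>
    simp only [min_eq_left, min_eq_right, ha, hb] <;> constructor <;> linarith

lemma phi_lip {N a b : ℕ} (h : a ≤ b + 1) (h' : b ≤ a + 1) :
    |phi N a - phi N b| ≤ 1/N := by
  unfold phi
  calc |max 0 (min 1 ((2*N - (a:ℝ))/N)) - max 0 (min 1 ((2*N - (b:ℝ))/N))|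
      ≤ |min 1 ((2*N - (a:ℝ))/N) - min 1 ((2*N - (b:ℝ))/N)| := by
        simpa [max_comm] using abs_max_sub_max_le_abs (min 1 ((2*N - (a:ℝ))/N)) (min 1 ((2*N - (b:ℝ))/N)) 0
    _ ≤ |(2*N - (a:ℝ))/N - (2*N - (b:ℝ))/N| := by
        simpa [min_comm] using abs_min_sub_min_le_abs ((2*N - (a:ℝ))/N) ((2*N - (b:ℝ))/N) 1
    _ ≤ 1/N := by
        rcases Nat.eq_zero_or_pos N with rfl | hN
        · simp
        have hN' : (0:ℝ) < N := by exact_mod_cast hN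
        rw [div_sub_div_same, abs_div, abs_of_pos hN', div_le_div_iff₀ hN' hN']
        have h1 : (a:ℝ) ≤ (b:ℝ) + 1 := by exact_mod_cast h
        have h2 : (b:ℝ) ≤ (a:ℝ) + 1 := by exact_mod_cast h'
        have he : 2 * (N:ℝ) - a - (2*N - b) = (b:ℝ) - a := by ring
        rw [he]
        have : |(b:ℝ) - a| ≤ 1 := abs_le.2 ⟨by linarith, by linarith⟩
        nlinarith


section Graph
variable {V : Type*} [DecidableEq V] {G : SimpleGraph V} [∀ v, Fintype (G.neighborSet v)]
  [DecidableRel G.Adj]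

lemma SS_swap (T : Finset V) (F : V → V → ℝ) :
    ∑ x ∈ T, ∑ y ∈ T.filter (G.Adj x), F x y
      = ∑ x ∈ T, ∑ y ∈ T.filter (G.Adj x), F y x := by
  simp only [Finset.sum_filter]
  rw [Finset.sum_comm]
  exact Finset.sum_congr rfl fun a _ => Finset.sum_congr rfl fun b _ =>
    if_congr (G.adj_comm b a) rfl rfl

lemma pair_identity {a b s t : ℝ} (ha : a ≠ 0) (hb : b ≠ 0) :
    (b - a) * (t^2/b - s^2/a) = -((a*t - b*s)^2/(a*b)) + (t - s)^2 := by
  field_simp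
  ring

lemma dist_adj {p x y : V} (hconn : G.Connected) (h : G.Adj x y) :
    G.dist p y ≤ G.dist p x + 1 := by
  have := hconn.dist_triangle (u := p) (v := x) (w := y)
  rwa [SimpleGraph.dist_eq_one_iff_adj.2 h] at this

lemma filter_eq_nbr {T : Finset V} {x : V} (h : ∀ y, G.Adj x y → y ∈ T) :
    T.filter (G.Adj x) = G.neighborFinset x := by
  ext y
  simp only [Finset.mem_filter, SimpleGraph.mem_neighborFinset]
  exact ⟨fun hy => hy.2, fun hy => ⟨h y hy, hy⟩⟩

lemma star {f : V → ℝ} {p : V} (hconn : G.Connected) (hf : ∀ x, 0 < f x)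
    (hsuper : ∀ x, ∑ y ∈ G.neighborFinset x, (f y - f x) ≤ 0)
    (N : ℕ) (T : Finset V) (hT : ∀ x, x ∈ T ↔ G.dist p x ≤ 2*N+1) :
    ∑ x ∈ T, ∑ y ∈ T.filter (G.Adj x),
        (f x * phi N (G.dist p y) - f y * phi N (G.dist p x))^2 / (f x * f y)
      ≤ ∑ x ∈ T, ∑ y ∈ T.filter (G.Adj x),
        (phi N (G.dist p y) - phi N (G.dist p x))^2 := by
  set φ : V → ℝ := fun x => phi N (G.dist p x) with hφ
  have hfne : ∀ x, f x ≠ 0 := fun x => (hf x).ne'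
  have hmem : ∀ x y, G.dist p x ≤ 2*N → G.Adj x y → y ∈ T := by
    intro x y hx hxy
    rw [hT]
    exact le_trans (dist_adj hconn hxy) (by omega)
  -- step 1 : the directional sum against the test function is ≤ 0
  have hD : ∑ x ∈ T, ∑ y ∈ T.filter (G.Adj x), (f y - f x) * ((φ x)^2 / f x) ≤ 0 := by
    apply Finset.sum_nonpos
    intro x hx
    rw [← Finset.sum_mul]
    rcases le_or_gt (G.dist p x) (2*N) with h | h
    · rw [filter_eq_nbr (fun y hy => hmem x y h hy)]
      exact mul_nonpos_of_nonpos_of_nonneg (hsuper x)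
        (div_nonneg (sq_nonneg _) (hf x).le)
    · have h0 : φ x = 0 := phi_eq_zero (by omega)
      simp [h0]
  -- step 2 : symmetrization
  have key : 0 ≤ ∑ x ∈ T, ∑ y ∈ T.filter (G.Adj x),
      (f y - f x) * ((φ y)^2 / f y - (φ x)^2 / f x) := by
    have h1 : ∑ x ∈ T, ∑ y ∈ T.filter (G.Adj x),
        (f y - f x) * ((φ y)^2 / f y - (φ x)^2 / f x)
        = (∑ x ∈ T, ∑ y ∈ T.filter (G.Adj x), (f y - f x) * ((φ y)^2 / f y))
          - ∑ x ∈ T, ∑ y ∈ T.filter (G.Adj x), (f y - f x) * ((φ x)^2 / f x) := by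
      simp only [mul_sub, Finset.sum_sub_distrib]
    have h2 : ∑ x ∈ T, ∑ y ∈ T.filter (G.Adj x), (f y - f x) * ((φ y)^2 / f y)
        = ∑ x ∈ T, ∑ y ∈ T.filter (G.Adj x), (f x - f y) * ((φ x)^2 / f x) :=
      SS_swap T _
    have h3 : ∑ x ∈ T, ∑ y ∈ T.filter (G.Adj x), (f x - f y) * ((φ x)^2 / f x)
        = - ∑ x ∈ T, ∑ y ∈ T.filter (G.Adj x), (f y - f x) * ((φ x)^2 / f x) := by
      rw [← Finset.sum_neg_distrib]
      apply Finset.sum_congr rfl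
      intro x _
      rw [← Finset.sum_neg_distrib]
      apply Finset.sum_congr rfl
      intro y _
      ring
    rw [h1, h2, h3]
    linarith
  -- step 3 : pointwise algebraic identity
  have hpt : ∀ x y : V,
      (f y - f x) * ((φ y)^2 / f y - (φ x)^2 / f x)
        = -((f x * φ y - f y * φ x)^2 / (f x * f y)) + (φ y - φ x)^2 :=
    fun x y => pair_identity (hfne x) (hfne y)
  have hsums : ∑ x ∈ T, ∑ y ∈ T.filter (G.Adj x),
      (f y - f x) * ((φ y)^2 / f y - (φ x)^2 / f x)
      = (∑ x ∈ T, ∑ y ∈ T.filter (G.Adj x), (φ y - φ x)^2)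
        - ∑ x ∈ T, ∑ y ∈ T.filter (G.Adj x), (f x * φ y - f y * φ x)^2 / (f x * f y) := by
    rw [← Finset.sum_sub_distrib]
    apply Finset.sum_congr rfl
    intro x _
    rw [← Finset.sum_sub_distrib]
    apply Finset.sum_congr rfl
    intro y _
    rw [hpt x y]
    ring
  rw [hsums] at key
  linarith

noncomputable def ee (f : V → ℝ) (x y : V) : ℝ := (f y - f x)^2 / (f x * f y)

noncomputable def En (G : SimpleGraph V) [∀ v, Fintype (G.neighborSet v)]
    (B : ℕ → Finset V) (f : V → ℝ) (M : ℕ) : ℝ :=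
  ∑ x ∈ B M, ∑ y ∈ G.neighborFinset x, ee f x y

variable {f : V → ℝ} {p : V} {C : ℝ} {B : ℕ → Finset V}

lemma ee_nonneg (hf : ∀ x, 0 < f x) (x y : V) : 0 ≤ ee f x y :=
  div_nonneg (sq_nonneg _) (mul_pos (hf x) (hf y)).le

lemma En_nonneg (hf : ∀ x, 0 < f x) (M : ℕ) : 0 ≤ En G B f M :=
  Finset.sum_nonneg fun x _ => Finset.sum_nonneg fun y _ => ee_nonneg hf x y

lemma En_mono (hf : ∀ x, 0 < f x) (hB : ∀ M x, x ∈ B M ↔ G.dist p x ≤ M)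
    {M M' : ℕ} (h : M ≤ M') : En G B f M ≤ En G B f M' := by
  apply Finset.sum_le_sum_of_subset_of_nonneg
  · intro x hx
    rw [hB] at hx ⊢
    omega
  · intro x _ _
    exact Finset.sum_nonneg fun y _ => ee_nonneg hf x y

/-- the energy of a single edge is at most the total energy of a ball containing it -/
lemma ee_le_En (hf : ∀ x, 0 < f x) (hB : ∀ M x, x ∈ B M ↔ G.dist p x ≤ M)
    {x y : V} (hxy : G.Adj x y) : ee f x y ≤ En G B f (G.dist p x) := by
  have hx : x ∈ B (G.dist p x) := (hB _ x).2 le_rfl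
  calc ee f x y ≤ ∑ y' ∈ G.neighborFinset x, ee f x y' :=
        Finset.single_le_sum (fun z _ => ee_nonneg hf x z)
          ((SimpleGraph.mem_neighborFinset ..).2 hxy)
    _ ≤ En G B f (G.dist p x) :=
        Finset.single_le_sum (f := fun x' => ∑ y' ∈ G.neighborFinset x', ee f x' y')
          (fun z _ => Finset.sum_nonneg fun w _ => ee_nonneg hf z w) hx

/-- general lower bound : the M-ball energy is dominated by any pair-sum that
agrees with `ee` on the M-ball and is nonnegative -/
lemma lower (hconn : G.Connected) (hf : ∀ x, 0 < f x)
    (hB : ∀ M x, x ∈ B M ↔ G.dist p x ≤ M) (M N : ℕ) (hMN : N = M + 1)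
    (W : V → V → ℝ) (hW0 : ∀ x y, G.Adj x y → 0 ≤ W x y)
    (hWe : ∀ x y, G.dist p x ≤ M → G.Adj x y → W x y = ee f x y) :
    En G B f M ≤ ∑ x ∈ B (2*N+1), ∑ y ∈ (B (2*N+1)).filter (G.Adj x), W x y := by
  have hsub : B M ⊆ B (2*N+1) := by
    intro x hx
    rw [hB] at hx ⊢
    omega
  have hinner : ∀ x ∈ B M, ∑ y ∈ G.neighborFinset x, ee f x y
      = ∑ y ∈ (B (2*N+1)).filter (G.Adj x), W x y := by
    intro x hx
    have hdx : G.dist p x ≤ M := (hB M x).1 hx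
    rw [filter_eq_nbr (fun y hy => by
      rw [hB]
      exact le_trans (dist_adj hconn hy) (by omega))]
    exact Finset.sum_congr rfl fun y hy =>
      (hWe x y hdx ((SimpleGraph.mem_neighborFinset ..).1 hy)).symm
  calc En G B f M = ∑ x ∈ B M, ∑ y ∈ (B (2*N+1)).filter (G.Adj x), W x y :=
        Finset.sum_congr rfl hinner
    _ ≤ ∑ x ∈ B (2*N+1), ∑ y ∈ (B (2*N+1)).filter (G.Adj x), W x y := by
        apply Finset.sum_le_sum_of_subset_of_nonneg hsub
        intro x _ _
        exact Finset.sum_nonneg fun y hy =>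
          hW0 x y (Finset.mem_filter.1 hy).2

/-- vanishing off the annulus : if `φ` differs across an edge at `x`, then
`N ≤ dist p x ≤ 2N`. -/
lemma annulus_mem (hconn : G.Connected) {N : ℕ} (hN : 1 ≤ N) {x y : V}
    (hadj : G.Adj x y) (hne : phi N (G.dist p y) ≠ phi N (G.dist p x)) :
    N ≤ G.dist p x ∧ G.dist p x ≤ 2*N := by
  by_contra hP
  apply hne
  rcases not_and_or.1 hP with h | h
  · push_neg at h
    rw [phi_eq_one hN (le_trans (dist_adj hconn hadj) (by omega)),
      phi_eq_one hN (by omega)]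
  · push_neg at h
    have hy2 : 2*N ≤ G.dist p y := by
      have := dist_adj (p := p) hconn hadj.symm
      omega
    rw [phi_eq_zero hy2, phi_eq_zero (by omega)]

/-- counting bound : the cutoff Dirichlet energy is at most `4C`. -/
lemma count (hconn : G.Connected) (hB : ∀ M x, x ∈ B M ↔ G.dist p x ≤ M)
    (hvolB : ∀ R : ℕ, 1 ≤ R → ∑ x ∈ B R, (G.degree x : ℝ) ≤ C * (R:ℝ)^2)
    {N : ℕ} (hN : 1 ≤ N) :
    ∑ x ∈ B (2*N+1), ∑ y ∈ (B (2*N+1)).filter (G.Adj x),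
        (phi N (G.dist p y) - phi N (G.dist p x))^2 ≤ 4*C := by
  set T := B (2*N+1) with hTdef
  set φ : V → ℝ := fun x => phi N (G.dist p x) with hφ
  have hN0 : (N:ℝ) ≠ 0 := by positivity
  have hvanish : ∀ x ∈ T, (∑ y ∈ T.filter (G.Adj x), (φ y - φ x)^2) ≠ 0 →
      N ≤ G.dist p x ∧ G.dist p x ≤ 2*N := by
    intro x _ hne
    by_contra hP
    apply hne
    apply Finset.sum_eq_zero
    intro y hy
    have hadj : G.Adj x y := (Finset.mem_filter.1 hy).2
    have : φ y = φ x := by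
      by_contra hne2
      exact hP (annulus_mem hconn hN hadj hne2)
    simp [this]
  rw [← Finset.sum_filter_of_ne hvanish]
  have hstep : ∀ x ∈ T.filter (fun x => N ≤ G.dist p x ∧ G.dist p x ≤ 2*N),
      ∑ y ∈ T.filter (G.Adj x), (φ y - φ x)^2 ≤ (G.degree x : ℝ) * (1/N)^2 := by
    intro x _
    calc ∑ y ∈ T.filter (G.Adj x), (φ y - φ x)^2
        ≤ ∑ _y ∈ T.filter (G.Adj x), (1/N:ℝ)^2 := by
          apply Finset.sum_le_sum
          intro y hy
          have hadj : G.Adj x y := (Finset.mem_filter.1 hy).2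
          have h1 : |φ y - φ x| ≤ 1/N :=
            phi_lip (dist_adj hconn hadj) (dist_adj hconn hadj.symm)
          calc (φ y - φ x)^2 = |φ y - φ x|^2 := (sq_abs _).symm
            _ ≤ (1/N:ℝ)^2 := pow_le_pow_left₀ (abs_nonneg _) h1 2
      _ = ((T.filter (G.Adj x)).card : ℝ) * (1/N:ℝ)^2 := by
          rw [Finset.sum_const, nsmul_eq_mul]
      _ ≤ (G.degree x : ℝ) * (1/N)^2 := by
          apply mul_le_mul_of_nonneg_right _ (by positivity)
          have hsub : (T.filter (G.Adj x)) ⊆ G.neighborFinset x := fun y hy =>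
            (SimpleGraph.mem_neighborFinset ..).2 (Finset.mem_filter.1 hy).2
          have := Finset.card_le_card hsub
          rw [SimpleGraph.card_neighborFinset_eq_degree] at this
          exact_mod_cast this
  calc ∑ x ∈ T.filter (fun x => N ≤ G.dist p x ∧ G.dist p x ≤ 2*N),
        ∑ y ∈ T.filter (G.Adj x), (φ y - φ x)^2
      ≤ ∑ x ∈ T.filter (fun x => N ≤ G.dist p x ∧ G.dist p x ≤ 2*N),
          (G.degree x : ℝ) * (1/N)^2 := Finset.sum_le_sum hstep
    _ = (∑ x ∈ T.filter (fun x => N ≤ G.dist p x ∧ G.dist p x ≤ 2*N),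
          (G.degree x : ℝ)) * (1/N)^2 := (Finset.sum_mul ..).symm
    _ ≤ (∑ x ∈ B (2*N), (G.degree x : ℝ)) * (1/N)^2 := by
        apply mul_le_mul_of_nonneg_right _ (by positivity)
        apply Finset.sum_le_sum_of_subset_of_nonneg
        · intro x hx
          rw [hB]
          exact (Finset.mem_filter.1 hx).2.2
        · intro x _ _
          positivity
    _ ≤ (C * ((2*N : ℕ):ℝ)^2) * (1/N)^2 :=
        mul_le_mul_of_nonneg_right (hvolB (2*N) (by omega)) (by positivity)
    _ = 4*C := by
        push_cast
        field_simp
        ring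

/-- Step 1 : the ball energies are uniformly bounded by `4C`. -/
lemma En_le (hconn : G.Connected) (hf : ∀ x, 0 < f x)
    (hsuper : ∀ x, ∑ y ∈ G.neighborFinset x, (f y - f x) ≤ 0)
    (hB : ∀ M x, x ∈ B M ↔ G.dist p x ≤ M)
    (hvolB : ∀ R : ℕ, 1 ≤ R → ∑ x ∈ B R, (G.degree x : ℝ) ≤ C * (R:ℝ)^2)
    (M : ℕ) : En G B f M ≤ 4*C := by
  set N := M + 1 with hN
  have h1 : En G B f M ≤ ∑ x ∈ B (2*N+1), ∑ y ∈ (B (2*N+1)).filter (G.Adj x),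
      (f x * phi N (G.dist p y) - f y * phi N (G.dist p x))^2 / (f x * f y) := by
    apply lower hconn hf hB M N hN
    · intro x y _
      exact div_nonneg (sq_nonneg _) (mul_pos (hf x) (hf y)).le
    · intro x y hdx hadj
      rw [phi_eq_one (by omega) (show G.dist p x ≤ N by omega),
        phi_eq_one (by omega) (le_trans (dist_adj hconn hadj) (by omega))]
      unfold ee
      rw [mul_one, mul_one]
      congr 1
      ring
  exact h1.trans ((star hconn hf hsuper N (B (2*N+1)) (hB (2*N+1))).trans
    (count hconn hB hvolB (by omega)))

/-- edge ratio bound -/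
lemma ratio (hconn : G.Connected) (hf : ∀ x, 0 < f x)
    (hsuper : ∀ x, ∑ y ∈ G.neighborFinset x, (f y - f x) ≤ 0)
    (hB : ∀ M x, x ∈ B M ↔ G.dist p x ≤ M)
    (hvolB : ∀ R : ℕ, 1 ≤ R → ∑ x ∈ B R, (G.degree x : ℝ) ≤ C * (R:ℝ)^2)
    {x y : V} (hxy : G.Adj x y) : f y ≤ (4*C+2) * f x := by
  have h1 : ee f x y ≤ 4*C :=
    (ee_le_En hf hB hxy).trans (En_le hconn hf hsuper hB hvolB _)
  have h2 : (f y - f x)^2 ≤ 4*C * (f x * f y) := by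
    rw [ee, div_le_iff₀ (mul_pos (hf x) (hf y))] at h1
    linarith
  nlinarith [hf x, hf y, sq_nonneg (f x)]

lemma pair_identity2 {a b s t : ℝ} (ha : a ≠ 0) (hb : b ≠ 0) :
    t^2 * ((b - a)^2/(a*b)) = (a*t - b*s)^2/(a*b) - (t - s)^2 + (b/a - 1)*(t^2 - s^2) := by
  field_simp
  ring

/-- Step 2 : the quantitative decay inequality. -/
lemma step2 (hconn : G.Connected) (hf : ∀ x, 0 < f x)
    (hsuper : ∀ x, ∑ y ∈ G.neighborFinset x, (f y - f x) ≤ 0)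
    (hC : 0 < C)
    (hB : ∀ M x, x ∈ B M ↔ G.dist p x ≤ M)
    (hvolB : ∀ R : ℕ, 1 ≤ R → ∑ x ∈ B R, (G.degree x : ℝ) ≤ C * (R:ℝ)^2)
    (M : ℕ) : En G B f M ^ 2
      ≤ 16*C*(4*C+2) * (En G B f (2*M+2) - En G B f M) := by
  set N := M + 1 with hNdef
  set K : ℝ := 4*C+2 with hKdef
  have hK0 : (0:ℝ) ≤ K := by positivity
  set T := B (2*N+1) with hTdef
  set φ : V → ℝ := fun x => phi N (G.dist p x) with hφ
  set A := T.filter (fun x => N ≤ G.dist p x ∧ G.dist p x ≤ 2*N) with hAdef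
  have hfne : ∀ x, f x ≠ 0 := fun x => (hf x).ne'
  -- (i) lower bound for the LHS
  have h1 : En G B f M ≤ ∑ x ∈ T, ∑ y ∈ T.filter (G.Adj x), (φ y)^2 * ee f x y := by
    apply lower hconn hf hB M N hNdef
    · intro x y _
      exact mul_nonneg (sq_nonneg _) (ee_nonneg hf x y)
    · intro x y hdx hadj
      rw [hφ]
      simp only
      rw [phi_eq_one (by omega) (le_trans (dist_adj hconn hadj) (by omega))]
      ring
  -- (ii) pointwise identity and star
  have h2 : ∑ x ∈ T, ∑ y ∈ T.filter (G.Adj x), (φ y)^2 * ee f x y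
      ≤ ∑ x ∈ T, ∑ y ∈ T.filter (G.Adj x), (f y / f x - 1) * ((φ y)^2 - (φ x)^2) := by
    have hid : ∀ x y : V, (φ y)^2 * ee f x y
        = (f x * φ y - f y * φ x)^2 / (f x * f y) - (φ y - φ x)^2
          + (f y / f x - 1) * ((φ y)^2 - (φ x)^2) := by
      intro x y
      exact pair_identity2 (hfne x) (hfne y)
    have hsum : ∑ x ∈ T, ∑ y ∈ T.filter (G.Adj x), (φ y)^2 * ee f x y
        = (∑ x ∈ T, ∑ y ∈ T.filter (G.Adj x),
            (f x * φ y - f y * φ x)^2 / (f x * f y))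
          - (∑ x ∈ T, ∑ y ∈ T.filter (G.Adj x), (φ y - φ x)^2)
          + ∑ x ∈ T, ∑ y ∈ T.filter (G.Adj x),
              (f y / f x - 1) * ((φ y)^2 - (φ x)^2) := by
      rw [← Finset.sum_sub_distrib, ← Finset.sum_add_distrib]
      apply Finset.sum_congr rfl
      intro x _
      rw [← Finset.sum_sub_distrib, ← Finset.sum_add_distrib]
      exact Finset.sum_congr rfl fun y _ => by rw [hid x y]
    rw [hsum]
    have := star hconn hf hsuper N T (hB (2*N+1))
    linarith
  -- (iii) restrict to the annulus
  have h3 : ∑ x ∈ T, ∑ y ∈ T.filter (G.Adj x), (f y / f x - 1) * ((φ y)^2 - (φ x)^2)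
      = ∑ x ∈ A, ∑ y ∈ T.filter (G.Adj x), (f y / f x - 1) * ((φ y)^2 - (φ x)^2) := by
    rw [hAdef]
    rw [Finset.sum_filter_of_ne]
    intro x _ hne
    by_contra hP
    apply hne
    apply Finset.sum_eq_zero
    intro y hy
    have hadj : G.Adj x y := (Finset.mem_filter.1 hy).2
    have heq : φ y = φ x := by
      by_contra hne2
      exact hP (annulus_mem hconn (by omega) hadj hne2)
    rw [heq]
    ring
  -- (iv) pointwise bound on the annulus terms
  have h4 : ∀ x, ∀ y, G.Adj x y →
      (f y / f x - 1) * ((φ y)^2 - (φ x)^2)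
        ≤ 2 * Real.sqrt K * (|φ y - φ x| * Real.sqrt (ee f x y)) := by
    intro x y hadj
    have hr : |f y / f x - 1| ≤ Real.sqrt K * Real.sqrt (ee f x y) := by
      have hKe : (f y / f x - 1)^2 ≤ K * ee f x y := by
        have h5 : (f y / f x - 1)^2 = ee f x y * (f y / f x) := by
          rw [ee]
          field_simp [hfne x, hfne y]
        have h6 : f y / f x ≤ K := by
          rw [div_le_iff₀ (hf x)]
          exact (ratio hconn hf hsuper hB hvolB hadj).trans (le_of_eq (by rw [hKdef]))
        calc (f y / f x - 1)^2 = ee f x y * (f y / f x) := h5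
          _ ≤ ee f x y * K := mul_le_mul_of_nonneg_left h6 (ee_nonneg hf x y)
          _ = K * ee f x y := mul_comm _ _
      calc |f y / f x - 1| = Real.sqrt ((f y / f x - 1)^2) := (Real.sqrt_sq_eq_abs _).symm
        _ ≤ Real.sqrt (K * ee f x y) := Real.sqrt_le_sqrt hKe
        _ = Real.sqrt K * Real.sqrt (ee f x y) := Real.sqrt_mul hK0 _
    have hts : |(φ y)^2 - (φ x)^2| ≤ 2 * |φ y - φ x| := by
      have hy1 : |φ y + φ x| ≤ 2 := by
        rw [abs_le]
        constructor
        · have := phi_nonneg N (G.dist p y)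
          have := phi_nonneg N (G.dist p x)
          rw [hφ]; simp only; linarith
        · have := phi_le_one N (G.dist p y)
          have := phi_le_one N (G.dist p x)
          rw [hφ]; simp only; linarith
      calc |(φ y)^2 - (φ x)^2| = |φ y + φ x| * |φ y - φ x| := by
            rw [← abs_mul]; congr 1; ring
        _ ≤ 2 * |φ y - φ x| :=
            mul_le_mul_of_nonneg_right hy1 (abs_nonneg _)
    calc (f y / f x - 1) * ((φ y)^2 - (φ x)^2)
        ≤ |(f y / f x - 1) * ((φ y)^2 - (φ x)^2)| := le_abs_self _
      _ = |f y / f x - 1| * |(φ y)^2 - (φ x)^2| := abs_mul _ _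
      _ ≤ (Real.sqrt K * Real.sqrt (ee f x y)) * (2 * |φ y - φ x|) := by
          apply mul_le_mul hr hts (abs_nonneg _)
          positivity
      _ = 2 * Real.sqrt K * (|φ y - φ x| * Real.sqrt (ee f x y)) := by ring
  -- (v) Cauchy-Schwarz over the annulus pairs
  have h5 : ∑ x ∈ A, ∑ y ∈ T.filter (G.Adj x),
        (|φ y - φ x| * Real.sqrt (ee f x y))
      ≤ Real.sqrt ((4*C) * (En G B f (2*N) - En G B f M)) := by
    set σS := A.sigma (fun x => T.filter (G.Adj x)) with hσ
    have hps : ∑ x ∈ A, ∑ y ∈ T.filter (G.Adj x),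
          (|φ y - φ x| * Real.sqrt (ee f x y))
        = ∑ z ∈ σS, |φ z.2 - φ z.1| * Real.sqrt (ee f z.1 z.2) := by
      rw [hσ, Finset.sum_sigma]
    have hCS := Finset.sum_mul_sq_le_sq_mul_sq σS
      (fun z => |φ z.2 - φ z.1|) (fun z => Real.sqrt (ee f z.1 z.2))
    have hF : ∑ z ∈ σS, |φ z.2 - φ z.1|^2 ≤ 4*C := by
      have : ∑ z ∈ σS, |φ z.2 - φ z.1|^2
          = ∑ x ∈ A, ∑ y ∈ T.filter (G.Adj x), (φ y - φ x)^2 := by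
        rw [hσ, Finset.sum_sigma]
        exact Finset.sum_congr rfl fun x _ => Finset.sum_congr rfl fun y _ => sq_abs _
      rw [this]
      calc ∑ x ∈ A, ∑ y ∈ T.filter (G.Adj x), (φ y - φ x)^2
          ≤ ∑ x ∈ T, ∑ y ∈ T.filter (G.Adj x), (φ y - φ x)^2 := by
            apply Finset.sum_le_sum_of_subset_of_nonneg (Finset.filter_subset _ _)
            intro x _ _
            exact Finset.sum_nonneg fun y _ => sq_nonneg _
        _ ≤ 4*C := count hconn hB hvolB (by omega)
    have hG : ∑ z ∈ σS, (Real.sqrt (ee f z.1 z.2))^2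
        ≤ En G B f (2*N) - En G B f M := by
      have heq : ∑ z ∈ σS, (Real.sqrt (ee f z.1 z.2))^2
          = ∑ x ∈ A, ∑ y ∈ T.filter (G.Adj x), ee f x y := by
        rw [hσ, Finset.sum_sigma]
        exact Finset.sum_congr rfl fun x _ => Finset.sum_congr rfl fun y _ =>
          Real.sq_sqrt (ee_nonneg hf x y)
      rw [heq]
      have hsubBM : B M ⊆ B (2*N) := by
        intro x hx
        rw [hB] at hx ⊢
        omega
      calc ∑ x ∈ A, ∑ y ∈ T.filter (G.Adj x), ee f x y
          ≤ ∑ x ∈ A, ∑ y ∈ G.neighborFinset x, ee f x y := by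
            apply Finset.sum_le_sum
            intro x _
            apply Finset.sum_le_sum_of_subset_of_nonneg
            · intro y hy
              exact (SimpleGraph.mem_neighborFinset ..).2 (Finset.mem_filter.1 hy).2
            · intro y _ _
              exact ee_nonneg hf x y
        _ ≤ ∑ x ∈ B (2*N) \ B M, ∑ y ∈ G.neighborFinset x, ee f x y := by
            apply Finset.sum_le_sum_of_subset_of_nonneg
            · intro x hx
              rw [hAdef, Finset.mem_filter] at hx
              rw [Finset.mem_sdiff, hB, hB]
              omega
            · intro x _ _
              exact Finset.sum_nonneg fun y _ => ee_nonneg hf x y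
        _ = En G B f (2*N) - En G B f M := Finset.sum_sdiff_eq_sub hsubBM
    have hnn : 0 ≤ ∑ z ∈ σS, |φ z.2 - φ z.1| * Real.sqrt (ee f z.1 z.2) :=
      Finset.sum_nonneg fun z _ => mul_nonneg (abs_nonneg _) (Real.sqrt_nonneg _)
    rw [hps]
    rw [← Real.sqrt_sq hnn]
    apply Real.sqrt_le_sqrt
    calc (∑ z ∈ σS, |φ z.2 - φ z.1| * Real.sqrt (ee f z.1 z.2))^2
        ≤ (∑ z ∈ σS, |φ z.2 - φ z.1|^2) * ∑ z ∈ σS, (Real.sqrt (ee f z.1 z.2))^2 :=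
          hCS
      _ ≤ (4*C) * (En G B f (2*N) - En G B f M) := by
          apply mul_le_mul hF hG
            (Finset.sum_nonneg fun z _ => sq_nonneg _) (by positivity)
  -- (vi) put everything together
  have hΔ : 0 ≤ En G B f (2*N) - En G B f M := by
    have := En_mono (p := p) hf hB (show M ≤ 2*N by omega)
    linarith
  have hfinal : En G B f M ≤ 2 * Real.sqrt K *
      Real.sqrt ((4*C) * (En G B f (2*N) - En G B f M)) := by
    have hb1 : ∑ x ∈ A, ∑ y ∈ T.filter (G.Adj x),
          (f y / f x - 1) * ((φ y)^2 - (φ x)^2)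
        ≤ 2 * Real.sqrt K * ∑ x ∈ A, ∑ y ∈ T.filter (G.Adj x),
            (|φ y - φ x| * Real.sqrt (ee f x y)) := by
      rw [Finset.mul_sum]
      apply Finset.sum_le_sum
      intro x _
      rw [Finset.mul_sum]
      apply Finset.sum_le_sum
      intro y hy
      exact h4 x y (Finset.mem_filter.1 hy).2
    have hb2 : 2 * Real.sqrt K * ∑ x ∈ A, ∑ y ∈ T.filter (G.Adj x),
          (|φ y - φ x| * Real.sqrt (ee f x y))
        ≤ 2 * Real.sqrt K * Real.sqrt ((4*C) * (En G B f (2*N) - En G B f M)) :=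
      mul_le_mul_of_nonneg_left h5 (by positivity)
    linarith [h1, h2, h3 ▸ le_trans h2 (le_of_eq h3)]
  have h2N : 2*N = 2*M+2 := by omega
  rw [← h2N]
  have hEnn := En_nonneg (G := G) (B := B) hf M
  calc En G B f M ^ 2
      ≤ (2 * Real.sqrt K * Real.sqrt ((4*C) * (En G B f (2*N) - En G B f M)))^2 :=
        pow_le_pow_left₀ hEnn hfinal 2
    _ = 4 * (Real.sqrt K)^2 *
          (Real.sqrt ((4*C) * (En G B f (2*N) - En G B f M)))^2 := by ring
    _ = 16*C*K * (En G B f (2*N) - En G B f M) := by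
        rw [Real.sq_sqrt hK0, Real.sq_sqrt (by positivity : (0:ℝ) ≤ (4*C) * (En G B f (2*N) - En G B f M))]
        ring
    _ = 16*C*(4*C+2) * (En G B f (2*N) - En G B f M) := by rw [hKdef]

end Graph
end Stmt19

/-- Parabolicity of semiplanar graphs with nonnegative curvature: let `G` be the
(connected, locally finite) graph of a nonnegatively curved semiplanar graph, with
vertex degrees in `[3,6]` and quadratic volume growth
`|B_R(p)| = Σ_{x ∈ B_R(p)} dₓ ≤ C·R²` for all `R ≥ 1` (inherited from the quadratic
Hausdorff-measure growth of its polygonal surface `S(G)`). Then `G` is parabolic: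
every positive superharmonic function on `G` is constant. -/
theorem stmt_19 {V : Type*} (G : SimpleGraph V) [∀ v, Fintype (G.neighborSet v)]
    (hconn : G.Connected)
    (hdeg : ∀ v, 3 ≤ G.degree v ∧ G.degree v ≤ 6)
    (C : ℝ) (hC : 0 < C)
    (hfin : ∀ (p : V) (R : ℕ), ({x : V | G.dist p x ≤ R} : Set V).Finite)
    (hvol : ∀ (p : V) (R : ℕ), 1 ≤ R →
      ∑ x ∈ (hfin p R).toFinset, (G.degree x : ℝ) ≤ C * (R : ℝ) ^ 2)
    (f : V → ℝ) (hf : ∀ x, 0 < f x)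
    (hsuper : ∀ x, ∑ y ∈ G.neighborFinset x, (f y - f x) ≤ 0) :
    ∀ x y, f x = f y := by
  classical
  obtain ⟨p⟩ := hconn.nonempty
  set B : ℕ → Finset V := fun M => (hfin p M).toFinset with hBdef
  have hB : ∀ M x, x ∈ B M ↔ G.dist p x ≤ M := by
    intro M x
    rw [hBdef]
    simp [Set.Finite.mem_toFinset]
  have hvolB : ∀ R : ℕ, 1 ≤ R → ∑ x ∈ B R, (G.degree x : ℝ) ≤ C * (R:ℝ)^2 :=
    fun R hR => hvol p R hR
  set EE : ℕ → ℝ := fun M => Stmt19.En G B f M with hEE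
  have hE4C : ∀ M, EE M ≤ 4*C :=
    fun M => Stmt19.En_le hconn hf hsuper hB hvolB M
  have hEnn : ∀ M, 0 ≤ EE M := fun M => Stmt19.En_nonneg hf M
  have hstep : ∀ M, EE M ^ 2 ≤ 16*C*(4*C+2) * (EE (2*M+2) - EE M) :=
    fun M => Stmt19.step2 hconn hf hsuper hC hB hvolB M
  -- supremum argument : the energies are all zero
  have hbdd : BddAbove (Set.range EE) := ⟨4*C, by rintro _ ⟨M, rfl⟩; exact hE4C M⟩
  set s : ℝ := ⨆ M, EE M with hsdef
  have hle_s : ∀ M, EE M ≤ s := fun M => le_ciSup hbdd M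
  have hs0 : s ≤ 0 := by
    by_contra hs
    push_neg at hs
    set D : ℝ := 16*C*(4*C+2) with hD
    have hDpos : 0 < D := by positivity
    set ε : ℝ := min (s/2) (s^2/(8*D)) with hε
    have hεpos : 0 < ε := lt_min (by linarith) (by positivity)
    obtain ⟨M, hM⟩ : ∃ M, s - ε < EE M := by
      by_contra h
      push_neg at h
      have : s ≤ s - ε := ciSup_le fun M => h M
      linarith
    have h1 : EE (2*M+2) ≤ s := hle_s _
    have h2 := hstep M
    have hse : 0 ≤ s - ε := by
      have : ε ≤ s/2 := min_le_left _ _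
      linarith
    have h3 : (s - ε)^2 ≤ EE M ^ 2 := pow_le_pow_left₀ hse hM.le 2
    have h4 : EE (2*M+2) - EE M ≤ ε := by linarith
    have h5 : EE M ^ 2 ≤ D * ε :=
      h2.trans (mul_le_mul_of_nonneg_left h4 hDpos.le)
    have h6 : D * ε ≤ s^2/8 := by
      have : ε ≤ s^2/(8*D) := min_le_right _ _
      calc D * ε ≤ D * (s^2/(8*D)) := mul_le_mul_of_nonneg_left this hDpos.le
        _ = s^2/8 := by field_simp
    have h7 : (s/2)^2 ≤ (s - ε)^2 := by
      apply pow_le_pow_left₀ (by linarith) _ 2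
      have : ε ≤ s/2 := min_le_left _ _
      linarith
    nlinarith
  -- energies vanish, hence f is constant on edges
  have hzero : ∀ x y, G.Adj x y → f x = f y := by
    intro x y hxy
    have h1 : Stmt19.ee f x y ≤ EE (G.dist p x) := Stmt19.ee_le_En hf hB hxy
    have h2 : Stmt19.ee f x y = 0 :=
      le_antisymm (h1.trans ((hle_s _).trans hs0)) (Stmt19.ee_nonneg hf x y)
    rw [Stmt19.ee, div_eq_zero_iff] at h2
    rcases h2 with h2 | h2
    · have := pow_eq_zero_iff (n := 2) (by norm_num) |>.1 h2
      linarith [sub_eq_zero.1 this]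
    · exact absurd h2 (mul_pos (hf x) (hf y)).ne'
  -- conclude by connectivity
  intro x y
  obtain ⟨w⟩ := hconn.preconnected x y
  induction w with
  | nil => rfl
  | cons h _ ih => exact (hzero _ _ h).trans ih
end
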